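/- arXiv:1206.0626 — 13 statements merged into one kernel-verified Lean document; each statement's English description precedes it below -/
import Mathlib

section
/- For every unbounded metric space X, the partially ordered set ω^{↑X} of all bounded-to-bounded functions f: X → ω (ordered pointwise: f ≤ g iff f(x) ≤ g(x) for all x) has coinitiality at most 𝔡, the dominating number. That is, there exists a family E ⊆ ω^{↑X} of cardinality at most 𝔡 such that every g ∈ ω^{↑X} is pointwise bounded below by some member of E. -/
/-- A function `f : X → ℕ` on a metric space is bounded-to-bounded if a subset `B ⊆ X` is
bounded iff its image `f '' B` is finite. -/
def B2BNat {X : Type*} [MetricSpace X] (f : X → ℕ) : Prop :=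
  ∀ B : Set X, Bornology.IsBounded B ↔ (f '' B).Finite

/-- The dominating number 𝔡: the least cardinality of a cofinal family in `(ℕ → ℕ, ≤)`. -/
noncomputable def domNum : Cardinal :=
  sInf {c : Cardinal |
    ∃ D : Set (ℕ → ℕ), Cardinal.mk D = c ∧ ∀ g : ℕ → ℕ, ∃ f ∈ D, ∀ n, g n ≤ f n}

/-- For every unbounded metric space `X`, the poset of bounded-to-bounded functions
`f : X → ℕ` (pointwise order) has coinitiality at most 𝔡. -/
theorem stmt1 {X : Type*} [MetricSpace X] (hX : ¬ Bornology.IsBounded (Set.univ : Set X)) :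
    ∃ E : Set (X → ℕ), Cardinal.mk E ≤ Cardinal.lift.{_} domNum ∧ (∀ e ∈ E, B2BNat e) ∧
      ∀ g : X → ℕ, B2BNat g → ∃ e ∈ E, ∀ x, e x ≤ g x := by
  have hne : Nonempty X := by
    by_contra h
    exact hX (by simp [Set.univ_eq_empty_iff.mpr (not_nonempty_iff.mp h)])
  obtain ⟨x0⟩ := hne
  set ρ : X → ℕ := fun x => ⌈dist x x0⌉₊ with hρ
  have hDset : {c : Cardinal |
      ∃ D : Set (ℕ → ℕ), Cardinal.mk D = c ∧ ∀ g : ℕ → ℕ, ∃ f ∈ D, ∀ n, g n ≤ f n}.Nonempty :=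
    ⟨Cardinal.mk (Set.univ : Set (ℕ → ℕ)), Set.univ, rfl,
      fun g => ⟨g, trivial, fun n => le_rfl⟩⟩
  obtain ⟨D, hD, hdom⟩ : ∃ D : Set (ℕ → ℕ), Cardinal.mk D = domNum ∧
      ∀ g : ℕ → ℕ, ∃ f ∈ D, ∀ n, g n ≤ f n := csInf_mem hDset
  set H : (ℕ → ℕ) → ℕ → ℕ := fun f n => (Finset.range (n + 1)).sup f + n with hH
  have Hmono : ∀ f, Monotone (H f) := by
    intro f a b hab
    exact add_le_add (Finset.sup_mono (Finset.range_subset_range.mpr (by omega))) hab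
  have Hge : ∀ f n, n ≤ H f n := fun f n => Nat.le_add_left n _
  have Hgef : ∀ f n, f n ≤ H f n := fun f n =>
    le_add_of_le_of_nonneg (Finset.le_sup (Finset.self_mem_range_succ n)) (Nat.zero_le n)
  have hex : ∀ (f : ℕ → ℕ) (x : X), ∃ n, ρ x ≤ H f n := fun f x => ⟨ρ x, Hge f (ρ x)⟩
  set e : (ℕ → ℕ) → X → ℕ := fun f x => Nat.find (hex f x) with he
  have he1 : ∀ f x, ρ x ≤ H f (e f x) := fun f x => Nat.find_spec (hex f x)
  have he2 : ∀ f x, e f x ≤ ρ x := fun f x => Nat.find_le (Hge f (ρ x))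
  have hdist : ∀ x, dist x x0 ≤ (ρ x : ℝ) := fun x => Nat.le_ceil _
  have heB2B : ∀ f, B2BNat (e f) := by
    intro f B
    constructor
    · intro hB
      obtain ⟨r, hr⟩ := (Metric.isBounded_iff_subset_closedBall x0).mp hB
      apply Set.Finite.subset (Set.finite_Iic ⌈r⌉₊)
      rintro _ ⟨x, hx, rfl⟩
      have h1 : dist x x0 ≤ r := hr hx
      have hρx : ρ x ≤ ⌈r⌉₊ := Nat.ceil_le_ceil h1
      exact le_trans (he2 f x) hρx
    · intro hfin
      rcases hfin.bddAbove with ⟨n, hn⟩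
      refine (Metric.isBounded_iff_subset_closedBall x0).mpr ⟨(H f n : ℝ), fun x hx => ?_⟩
      have h1 : e f x ≤ n := hn ⟨x, hx, rfl⟩
      have h2 : ρ x ≤ H f n := le_trans (he1 f x) (Hmono f h1)
      have : dist x x0 ≤ (H f n : ℝ) := le_trans (hdist x) (by exact_mod_cast h2)
      simpa [Metric.mem_closedBall] using this
  refine ⟨e '' D, ?_, ?_, ?_⟩
  · have h := Cardinal.mk_image_le_lift (f := e) (s := D)
    rw [hD] at h
    simpa using h
  · rintro _ ⟨f, _, rfl⟩
    exact heB2B f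
  · intro g hg
    have hgb : ∀ n : ℕ, ∃ m : ℕ, ∀ x, g x ≤ n → dist x x0 ≤ (m : ℝ) := by
      intro n
      have hbd : Bornology.IsBounded (g ⁻¹' Set.Iic n) := by
        rw [hg]
        exact (Set.finite_Iic n).subset (by rintro _ ⟨x, hx, rfl⟩; exact hx)
      obtain ⟨r, hr⟩ := (Metric.isBounded_iff_subset_closedBall x0).mp hbd
      exact ⟨⌈r⌉₊, fun x hx => le_trans (hr hx) (Nat.le_ceil r)⟩
    choose hgfun hgspec using hgb
    obtain ⟨f, hfD, hf⟩ := hdom hgfun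
    refine ⟨e f, ⟨f, hfD, rfl⟩, fun x => ?_⟩
    apply Nat.find_le
    have h1 : dist x x0 ≤ (hgfun (g x) : ℝ) := hgspec (g x) x le_rfl
    have h2 : ρ x ≤ hgfun (g x) := Nat.ceil_le.mpr h1
    exact le_trans h2 (le_trans (hf (g x)) (Hgef f (g x)))
end

section
/- Let φ: ω → ω be finite-to-one, and for a finite-to-one f: ω → ω define f̄(n) = max({0} ∪ {k ∈ ω : f(k) ≤ n}). If F ⊆ ω^{↑ω} is cofinal in the pointwise order on finite-to-one functions ω → ω, then the family {f̄ ∘ φ : f ∈ F} is coinitial in the set of finite-to-one functions g: ω → ω composed appropriately: for every finite-to-one g: ω → ω there exists f ∈ F with f̄(φ(x)) ≤ g(x) for all x ∈ ω. -/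
/-- A function `f : ℕ → ℕ` is finite-to-one if each preimage `f ⁻¹' {n}` is finite. -/
def FinToOne (f : ℕ → ℕ) : Prop := ∀ n : ℕ, (f ⁻¹' {n}).Finite

/-- `fbar f n = max ({0} ∪ {k : f k ≤ n})`. -/
noncomputable def fbar (f : ℕ → ℕ) (n : ℕ) : ℕ := sSup (insert 0 {k | f k ≤ n})

/-- If `φ` is finite-to-one and `F` is cofinal in the finite-to-one functions, then the family
`{fbar f ∘ φ : f ∈ F}` is coinitial in the finite-to-one functions. -/
theorem stmt2 (φ : ℕ → ℕ) (hφ : FinToOne φ)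
    (F : Set (ℕ → ℕ)) (hF : ∀ f ∈ F, FinToOne f)
    (hcof : ∀ g : ℕ → ℕ, FinToOne g → ∃ f ∈ F, ∀ n, g n ≤ f n) :
    ∀ g : ℕ → ℕ, FinToOne g → ∃ f ∈ F, ∀ x : ℕ, fbar f (φ x) ≤ g x := by
  intro g hg
  classical
  have hfin : ∀ k, {x | g x < k}.Finite := by
    intro k
    have hsub : {x | g x < k} ⊆ ⋃ j ∈ Finset.range k, g ⁻¹' {j} := by
      intro x hx
      simp only [Set.mem_iUnion, Finset.mem_range, Set.mem_preimage,
        Set.mem_singleton_iff]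
      exact ⟨g x, hx, rfl⟩
    exact (Set.Finite.biUnion (Finset.range k).finite_toSet
      (fun j _ => hg j)).subset hsub
  set h : ℕ → ℕ := fun k => ((hfin k).toFinset.sup φ) + k + 1 with hh_def
  have hh : FinToOne h := by
    intro n
    apply (Set.finite_le_nat n).subset
    intro k hk
    simp only [Set.mem_preimage, Set.mem_singleton_iff] at hk
    have hk' : k < h k := by simp [hh_def]
    simp only [Set.mem_setOf_eq]
    omega
  obtain ⟨f, hfF, hdom⟩ := hcof h hh
  refine ⟨f, hfF, fun x => ?_⟩
  apply csSup_le ⟨0, Set.mem_insert 0 _⟩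
  intro k hk
  rcases hk with rfl | hk
  · exact Nat.zero_le _
  · simp only [Set.mem_setOf_eq] at hk
    by_contra hkg
    push_neg at hkg
    have hx : x ∈ (hfin k).toFinset := by
      simp only [Set.Finite.mem_toFinset, Set.mem_setOf_eq]
      omega
    have h1 : φ x ≤ (hfin k).toFinset.sup φ := Finset.le_sup hx
    have h2 : h k ≤ f k := hdom k
    simp only [hh_def] at h2
    omega
end

section
/- Two subsets P, Q of a metric space (X,d) are asymptotically disjoint (i.e., for every real ε > 0 the intersection B(P,ε) ∩ B(Q,ε) of their ε-neighborhoods is bounded) if and only if there exists a bounded-to-bounded function f: X → ω such that the intersection B(P,f) ∩ B(Q,f) is bounded, where B(A,f) = ⋃_{a∈A} {y : d(y,a) ≤ f(a)}. -/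
/-- The `f`-neighborhood `B(A,f) = ⋃_{a ∈ A} {y : d(y,a) ≤ f a}` of a set `A`. -/
def fnbhd {X : Type*} [MetricSpace X] (A : Set X) (f : X → ℝ) : Set X :=
  {y | ∃ a ∈ A, dist y a ≤ f a}

open Metric Bornology

/-- Two subsets `P, Q` of a metric space are asymptotically disjoint (for every `ε > 0` the
intersection `B(P,ε) ∩ B(Q,ε)` is bounded) iff there is a bounded-to-bounded `f : X → ℕ`
with `B(P,f) ∩ B(Q,f)` bounded. -/
theorem stmt3 {X : Type*} [MetricSpace X] (P Q : Set X) :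
    (∀ ε : ℝ, 0 < ε →
        Bornology.IsBounded (fnbhd P (fun _ => ε) ∩ fnbhd Q (fun _ => ε))) ↔
    (∃ f : X → ℕ, B2BNat f ∧
        Bornology.IsBounded
          (fnbhd P (fun x => (f x : ℝ)) ∩ fnbhd Q (fun x => (f x : ℝ)))) := by
  classical
  constructor
  · intro h
    rcases isEmpty_or_nonempty X with hX | hne
    · refine ⟨fun _ => 0, fun B => ?_, ?_⟩
      · rw [Set.eq_empty_of_isEmpty B]; simp
      · rw [Set.eq_empty_of_isEmpty (_ ∩ _)]; exact isBounded_empty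
    · obtain ⟨x₀⟩ := hne
      have hr : ∀ n : ℕ, ∃ r : ℝ, 0 ≤ r ∧
          fnbhd P (fun _ => ((n : ℝ) + 1)) ∩ fnbhd Q (fun _ => ((n : ℝ) + 1)) ⊆
            closedBall x₀ r := by
        intro n
        obtain ⟨r, hrr⟩ := (h ((n : ℝ) + 1) (by positivity)).subset_closedBall x₀
        exact ⟨max r 0, le_max_right _ _,
          hrr.trans (closedBall_subset_closedBall (le_max_left _ _))⟩
      choose r hr0 hrS using hr
      set R : ℕ → ℝ := fun n => (n : ℝ) + 1 + r n with hRdef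
      set f : X → ℕ := fun x => Nat.findGreatest (fun n => R n ≤ dist x x₀) ⌈dist x x₀⌉₊
        with hfdef
      have hfspec : ∀ x, f x ≠ 0 → R (f x) ≤ dist x x₀ := by
        intro x hx
        exact (Nat.findGreatest_eq_iff.mp (rfl : f x = f x)).2.1 hx
      refine ⟨f, ?_, ?_⟩
      · intro B
        constructor
        · intro hB
          obtain ⟨rB, hrB⟩ := hB.subset_closedBall x₀
          refine (Set.finite_Iic ⌈rB⌉₊).subset ?_
          rintro - ⟨x, hx, rfl⟩
          exact (Nat.findGreatest_le _).trans (Nat.ceil_mono (hrB hx))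
        · intro hB
          obtain ⟨N, hN⟩ := hB.bddAbove
          refine (isBounded_closedBall (x := x₀) (r := R (N + 1))).subset ?_
          intro x hx
          simp only [mem_closedBall]
          by_contra hlt
          push_neg at hlt
          have h1 : R (N + 1) ≤ dist x x₀ := hlt.le
          have h2 : ((N : ℝ) + 1) ≤ dist x x₀ := by
            refine le_trans ?_ h1
            have := hr0 (N + 1)
            simp only [hRdef]
            push_cast
            linarith
          have h3 : N + 1 ≤ ⌈dist x x₀⌉₊ := by
            have := h2.trans (Nat.le_ceil _)
            exact_mod_cast this
          have h4 : N + 1 ≤ f x := Nat.le_findGreatest h3 h1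
          have h5 : f x ≤ N := hN ⟨x, hx, rfl⟩
          omega
      · refine (isBounded_closedBall (x := x₀) (r := r 0)).subset ?_
        rintro y ⟨⟨p, hp, hdp⟩, ⟨q, hq, hdq⟩⟩
        set n := max (f p) (f q) with hn
        have hyp : dist y p ≤ (n : ℝ) + 1 := by
          have h1 : f p ≤ n + 1 := le_trans (le_max_left _ _) (Nat.le_succ n)
          have h2 : (f p : ℝ) ≤ (n : ℝ) + 1 := by exact_mod_cast h1
          exact le_trans hdp h2
        have hyq : dist y q ≤ (n : ℝ) + 1 := by
          have h1 : f q ≤ n + 1 := le_trans (le_max_right _ _) (Nat.le_succ n)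
          have h2 : (f q : ℝ) ≤ (n : ℝ) + 1 := by exact_mod_cast h1
          exact le_trans hdq h2
        have hyS : dist y x₀ ≤ r n := hrS n ⟨⟨p, hp, hyp⟩, ⟨q, hq, hyq⟩⟩
        rcases Nat.eq_zero_or_pos n with h0 | hpos
        · rw [mem_closedBall]; rw [h0] at hyS; exact hyS
        · exfalso
          rcases max_cases (f p) (f q) with ⟨he, -⟩ | ⟨he, -⟩
          · have hfp : f p ≠ 0 := by omega
            have hRp : R (f p) ≤ dist p x₀ := hfspec p hfp
            have htri : dist p x₀ ≤ dist y p + dist y x₀ := by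
              rw [dist_comm y p] at *
              exact dist_triangle p y x₀
            have hRval : R (f p) = (f p : ℝ) + 1 + r (f p) := rfl
            have hdyp : dist y p ≤ (f p : ℝ) := hdp
            have hyS' : dist y x₀ ≤ r (f p ⊔ f q) := hyS
            rw [he] at hyS'
            linarith
          · have hfq : f q ≠ 0 := by omega
            have hRq : R (f q) ≤ dist q x₀ := hfspec q hfq
            have htri : dist q x₀ ≤ dist y q + dist y x₀ := by
              rw [dist_comm y q] at *
              exact dist_triangle q y x₀
            have hdyq : dist y q ≤ (f q : ℝ) := hdq
            have hRval : R (f q) = (f q : ℝ) + 1 + r (f q) := rfl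
            have hyS' : dist y x₀ ≤ r (f p ⊔ f q) := hyS
            rw [he] at hyS'
            linarith
  · rintro ⟨f, hf, hbd⟩ ε hε
    set n := ⌈ε⌉₊ with hn
    have hT : IsBounded {x | f x ≤ n} := by
      refine (hf _).mpr ((Set.finite_Iic n).subset ?_)
      rintro - ⟨x, hx, rfl⟩
      exact hx
    refine ((hbd.union (hT.cthickening (δ := ε))).union (hT.cthickening (δ := ε))).subset ?_
    rintro x ⟨⟨p, hp, hdp⟩, ⟨q, hq, hdq⟩⟩
    by_cases h1 : (f p : ℝ) < ε
    · left; right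
      exact mem_cthickening_of_dist_le x p ε _ (le_of_lt (Nat.lt_ceil.mpr h1)) hdp
    · by_cases h2 : (f q : ℝ) < ε
      · right
        exact mem_cthickening_of_dist_le x q ε _ (le_of_lt (Nat.lt_ceil.mpr h2)) hdq
      · left; left
        exact ⟨⟨p, hp, hdp.trans (not_lt.1 h1)⟩, ⟨q, hq, hdq.trans (not_lt.1 h2)⟩⟩
end

section
/- A subset A of a metric space X is asymptotically isolated (i.e., asymptotically disjoint from its complement X \ A) if and only if there exists a bounded-to-bounded function f: X → ω such that B(A,f) = A, where B(A,f) = ⋃_{a∈A} {y ∈ X : d(y,a) ≤ f(a)}. -/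
/-- A subset `A` of a metric space is asymptotically isolated (asymptotically disjoint from
its complement) iff there is a bounded-to-bounded `f : X → ℕ` with `B(A,f) = A`. -/
theorem stmt4 {X : Type*} [MetricSpace X] (A : Set X) :
    (∀ ε : ℝ, 0 < ε →
        Bornology.IsBounded (fnbhd A (fun _ => ε) ∩ fnbhd Aᶜ (fun _ => ε))) ↔
    (∃ f : X → ℕ, B2BNat f ∧ fnbhd A (fun x => (f x : ℝ)) = A) := by
  constructor
  · intro h
    rcases isEmpty_or_nonempty X with hX | hX
    · refine ⟨fun _ => 0, fun B => ?_, ?_⟩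
      · rw [Set.eq_empty_of_isEmpty B]
        simp [Bornology.isBounded_empty]
      · ext x; exact (IsEmpty.false x).elim
    · obtain ⟨x₀⟩ := hX
      set D : X → ℕ := fun x => ⌊dist x x₀⌋₊ with hD
      set S : X → Set ℕ := fun x => {n | n ≤ D x ∧ (x ∈ A → Metric.closedBall x n ⊆ A)}
        with hS
      have hmem0 : ∀ x, 0 ∈ S x := by
        intro x
        refine ⟨Nat.zero_le _, fun hx => ?_⟩
        intro y hy
        simp only [Metric.mem_closedBall, Nat.cast_zero, dist_le_zero] at hy
        rwa [hy]
      have hbdd : ∀ x, BddAbove (S x) := fun x => ⟨D x, fun n hn => hn.1⟩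
      set f : X → ℕ := fun x => sSup (S x) with hf
      have hfD : ∀ x, f x ≤ D x := fun x => csSup_le ⟨0, hmem0 x⟩ (fun n hn => hn.1)
      have hfmem : ∀ x, f x ∈ S x := fun x => Nat.sSup_mem ⟨0, hmem0 x⟩ (hbdd x)
      have hball : ∀ a ∈ A, Metric.closedBall a (f a) ⊆ A := fun a ha => (hfmem a).2 ha
      refine ⟨f, ?_, ?_⟩
      · intro B
        constructor
        · intro hB
          obtain ⟨c, hc⟩ := hB.subset_closedBall x₀
          apply Set.Finite.subset (Set.finite_Iic ⌊max c 0⌋₊)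
          rintro n ⟨x, hx, rfl⟩
          have hdx : dist x x₀ ≤ max c 0 := le_trans (hc hx) (le_max_left _ _)
          exact le_trans (hfD x) (Nat.floor_le_floor hdx)
        · intro hfin
          have hsub : B ⊆ ⋃ n ∈ f '' B, {x | f x = n} := by
            intro x hx
            exact Set.mem_biUnion ⟨x, hx, rfl⟩ rfl
          refine Bornology.IsBounded.subset ?_ hsub
          apply (Bornology.isBounded_biUnion hfin).2
          intro n _
          have : {x | f x = n} ⊆ Metric.closedBall x₀ (n + 1) ∪
              (fnbhd A (fun _ => (n : ℝ) + 2) ∩ fnbhd Aᶜ (fun _ => (n : ℝ) + 2)) := by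
            intro x hx
            simp only [Set.mem_setOf_eq] at hx
            by_cases hDx : D x ≤ n
            · left
              have h1 : dist x x₀ < D x + 1 := Nat.lt_floor_add_one _
              have : (D x : ℝ) + 1 ≤ (n : ℝ) + 1 := by exact_mod_cast Nat.add_le_add_right hDx 1
              exact Metric.mem_closedBall.2 (le_trans h1.le this)
            · push_neg at hDx
              have hxA : x ∈ A := by
                by_contra hxA
                have hmemD : D x ∈ S x := ⟨le_refl _, fun hxa => absurd hxa hxA⟩
                have : D x ≤ f x := le_csSup (hbdd x) hmemD
                omega
              have hnot : (n + 1) ∉ S x := by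
                intro hmem
                have : n + 1 ≤ f x := le_csSup (hbdd x) hmem
                omega
              have hnsub : ¬ Metric.closedBall x ((n : ℕ) + 1 : ℕ) ⊆ A := by
                intro hcon
                exact hnot ⟨by omega, fun _ => hcon⟩
              obtain ⟨b, hbmem, hbA⟩ := Set.not_subset.1 hnsub
              right
              constructor
              · exact ⟨x, hxA, by simp; positivity⟩
              · refine ⟨b, hbA, ?_⟩
                have := Metric.mem_closedBall.1 hbmem
                rw [dist_comm]
                push_cast at this ⊢
                linarith
          refine Bornology.IsBounded.subset ?_ this
          exact Bornology.IsBounded.union Metric.isBounded_closedBall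
            (h ((n : ℝ) + 2) (by positivity))
      · ext y
        constructor
        · rintro ⟨a, ha, hya⟩
          exact hball a ha (Metric.mem_closedBall.2 hya)
        · intro hy
          exact ⟨y, hy, by simp⟩
  · rintro ⟨f, hf, hA⟩ ε hε
    set N := ⌈2 * ε⌉₊ with hN
    have hT : Bornology.IsBounded (f ⁻¹' Set.Iic N) := by
      refine (hf _).2 (Set.Finite.subset (Set.finite_Iic N) ?_)
      rintro n ⟨x, hx, rfl⟩
      exact hx
    refine Bornology.IsBounded.subset (hT.cthickening (δ := ε)) ?_
    rintro x ⟨⟨a, ha, hxa⟩, ⟨b, hb, hxb⟩⟩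
    have hball : Metric.closedBall a (f a) ⊆ A := by
      intro y hy
      rw [← hA]
      exact ⟨a, ha, Metric.mem_closedBall.1 hy⟩
    have hfa : (f a : ℝ) < dist b a := by
      by_contra hcon
      push_neg at hcon
      exact hb (hball (Metric.mem_closedBall.2 hcon))
    have hba : dist b a ≤ 2 * ε := by
      have := dist_triangle b x a
      rw [dist_comm b x] at this
      linarith
    have hfaN : a ∈ f ⁻¹' Set.Iic N := by
      have h2 : (f a : ℝ) ≤ N := le_trans (le_of_lt hfa) (le_trans hba (Nat.le_ceil _))
      exact_mod_cast h2
    exact Metric.mem_cthickening_of_dist_le x a ε _ hfaN hxa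
end

section
/- A function φ: X → Y between metric spaces is boundedly oscillating if and only if there exists a bounded-to-bounded function ε: X → ω such that sup_{x∈X} diam φ(B(x, ε(x))) < ∞. -/
/-- `φ : X → Y` is boundedly oscillating: there is `D` such that for every `ε` there is a
bounded set `B` with `diam φ(B_ε(x)) ≤ D` for all `x ∉ B`. -/
def BoundedlyOsc {X Y : Type*} [MetricSpace X] [MetricSpace Y] (φ : X → Y) : Prop :=
  ∃ D : ℝ, ∀ ε : ℝ, ∃ B : Set X, Bornology.IsBounded B ∧
    ∀ x ∉ B, ∀ y ∈ φ '' Metric.closedBall x ε, ∀ z ∈ φ '' Metric.closedBall x ε,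
      dist y z ≤ D

/-- `φ : X → Y` is boundedly oscillating iff there is a bounded-to-bounded `ε : X → ℕ`
with `sup_x diam φ(B(x, ε x)) < ∞`. -/
theorem stmt5 {X Y : Type*} [MetricSpace X] [MetricSpace Y] (φ : X → Y) :
    BoundedlyOsc φ ↔
    ∃ ε : X → ℕ, B2BNat ε ∧ ∃ C : ℝ, ∀ x : X,
      ∀ y ∈ φ '' Metric.closedBall x (ε x), ∀ z ∈ φ '' Metric.closedBall x (ε x),
        dist y z ≤ C := by
  constructor
  · rintro ⟨D, hD⟩
    by_cases hX : Nonempty X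
    · obtain ⟨x₀⟩ := hX
      choose B hBbd hB using fun n : ℕ => hD (n : ℝ)
      have hr : ∀ n : ℕ, ∃ r : ℕ, B n ⊆ Metric.closedBall x₀ r := by
        intro n
        obtain ⟨r, hr⟩ := (hBbd n).subset_closedBall x₀
        exact ⟨⌈r⌉₊, hr.trans (Metric.closedBall_subset_closedBall (Nat.le_ceil r))⟩
      choose s hs using hr
      set R : ℕ → ℕ := fun n => n + (Finset.range (n + 1)).sup s with hRdef
      have hRn : ∀ n, n ≤ R n := fun n => Nat.le_add_right _ _
      have hRB : ∀ n, B n ⊆ Metric.closedBall x₀ (R n) := by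
        intro n
        refine (hs n).trans (Metric.closedBall_subset_closedBall ?_)
        have : s n ≤ R n := le_trans (Finset.le_sup (Finset.self_mem_range_succ n))
          (Nat.le_add_left _ _)
        exact_mod_cast this
      set S : X → Set ℕ := fun x => {n | (R n : ℝ) < dist x x₀} with hSdef
      have hSbdd : ∀ x, BddAbove (S x) := by
        intro x
        refine ⟨⌈dist x x₀⌉₊, fun n hn => ?_⟩
        have h1 : (n : ℝ) < dist x x₀ := lt_of_le_of_lt (by exact_mod_cast hRn n) hn
        have h2 : (n : ℝ) ≤ (⌈dist x x₀⌉₊ : ℝ) := h1.le.trans (Nat.le_ceil _)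
        exact_mod_cast h2
      set ε : X → ℕ := fun x => sSup (S x) with hεdef
      have hεmem : ∀ x, (S x).Nonempty → ε x ∈ S x := fun x hx => Nat.sSup_mem hx (hSbdd x)
      refine ⟨ε, ?_, max D 0, ?_⟩
      · intro A
        constructor
        · intro hA
          obtain ⟨M, hM⟩ := hA.subset_closedBall x₀
          refine (Set.finite_Iic ⌈M⌉₊).subset ?_
          rintro _ ⟨x, hx, rfl⟩
          rcases Set.eq_empty_or_nonempty (S x) with he | hne
          · simp [hεdef, he, csSup_empty]
          · have h1 := hεmem x hne
            have h2 : (R (ε x) : ℝ) < dist x x₀ := h1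
            have h3 : dist x x₀ ≤ M := hM hx
            have h4 : (ε x : ℝ) ≤ (R (ε x) : ℝ) := by exact_mod_cast hRn (ε x)
            have h5 : (ε x : ℝ) ≤ (⌈M⌉₊ : ℝ) := le_trans (h4.trans h2.le) (h3.trans (Nat.le_ceil M))
            exact_mod_cast h5
        · intro hfin
          obtain ⟨N, hN⟩ := hfin.bddAbove
          refine (Metric.isBounded_closedBall (x := x₀) (r := (R (N + 1) : ℝ))).subset ?_
          intro x hx
          by_contra hcon
          have h1 : (R (N + 1) : ℝ) < dist x x₀ := by
            simpa [Metric.mem_closedBall, not_le] using hcon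
          have h2 : N + 1 ≤ ε x := le_csSup (hSbdd x) h1
          have h3 : ε x ≤ N := hN ⟨x, hx, rfl⟩
          omega
      · intro x y hy z hz
        rcases Set.eq_empty_or_nonempty (S x) with he | hne
        · have hε0 : ε x = 0 := by simp [hεdef, he, csSup_empty]
          rw [hε0] at hy hz
          obtain ⟨y', hy', rfl⟩ := hy
          obtain ⟨z', hz', rfl⟩ := hz
          simp only [Nat.cast_zero, Metric.mem_closedBall] at hy' hz'
          have hy'' : y' = x := dist_le_zero.mp hy'
          have hz'' : z' = x := dist_le_zero.mp hz'
          subst hy''; subst hz''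
          simp [le_max_iff]
        · have h1 := hεmem x hne
          have h2 : (R (ε x) : ℝ) < dist x x₀ := h1
          have hxB : x ∉ B (ε x) := fun hx => absurd (hRB _ hx) (by
            simpa [Metric.mem_closedBall, not_le] using h2)
          exact le_trans (hB (ε x) x hxB y hy z hz) (le_max_left _ _)
    · have : IsEmpty X := not_nonempty_iff.mp hX
      refine ⟨fun _ => 0, ?_, 0, ?_⟩
      · intro A
        have : A = ∅ := Set.eq_empty_of_isEmpty A
        subst this
        simp
      · intro x; exact isEmptyElim x
  · rintro ⟨ε, hε, C, hC⟩
    refine ⟨C, fun e => ?_⟩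
    refine ⟨{x | ε x ≤ ⌈e⌉₊}, ?_, ?_⟩
    · rw [hε]
      refine (Set.finite_Iic ⌈e⌉₊).subset ?_
      rintro _ ⟨x, hx, rfl⟩
      exact hx
    · intro x hx y hy z hz
      simp only [Set.mem_setOf_eq, not_le] at hx
      have h1 : ⌈e⌉₊ + 1 ≤ ε x := hx
      have h2 : e ≤ (ε x : ℝ) := by
        have : e ≤ (⌈e⌉₊ : ℝ) := Nat.le_ceil e
        have h3 : ((⌈e⌉₊ : ℕ) : ℝ) ≤ (ε x : ℝ) := by exact_mod_cast (Nat.le_succ _).trans h1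
        linarith
      have hsub : Metric.closedBall x e ⊆ Metric.closedBall x (ε x) :=
        Metric.closedBall_subset_closedBall h2
      exact hC x y (Set.image_mono (f := φ) hsub hy) z (Set.image_mono (f := φ) hsub hz)
end

section
/- For every metric space X there exists a boundedly oscillating bounded-to-bounded function φ: X → ω. Concretely, fixing x₀ ∈ X and an increasing sequence of reals (r_n)_{n∈ω} with r₀ < 0 and r_{n+1} − r_n → ∞, the function φ defined by φ⁻¹(n) = B_{r_{n+1}}(x₀) \ B_{r_n}(x₀) is boundedly oscillating and bounded-to-bounded. -/
/-- Fix `x₀ ∈ X` and an increasing sequence of reals `(r n)` with `r 0 < 0` and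
`r (n+1) - r n → ∞`.  The function `φ : X → ℕ` defined by
`φ ⁻¹' {n} = B_{r (n+1)}(x₀) \ B_{r n}(x₀)` is boundedly oscillating and
bounded-to-bounded. -/
theorem stmt6 {X : Type*} [MetricSpace X] (x₀ : X) (r : ℕ → ℝ)
    (hmono : StrictMono r) (hr0 : r 0 < 0)
    (hgap : Filter.Tendsto (fun n => r (n + 1) - r n) Filter.atTop Filter.atTop)
    (φ : X → ℕ)
    (hφ : ∀ n : ℕ,
      φ ⁻¹' {n} = Metric.closedBall x₀ (r (n + 1)) \ Metric.closedBall x₀ (r n)) :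
    BoundedlyOsc φ ∧ B2BNat φ := by
  -- basic characterization of φ
  have key : ∀ x : X, r (φ x) < dist x x₀ ∧ dist x x₀ ≤ r (φ x + 1) := by
    intro x
    have hx : x ∈ φ ⁻¹' {φ x} := rfl
    rw [hφ] at hx
    obtain ⟨h1, h2⟩ := hx
    rw [Metric.mem_closedBall] at h1
    simp only [Set.mem_setOf_eq, Metric.mem_closedBall, not_le] at h2
    exact ⟨h2, h1⟩
  -- r is unbounded
  have hub : ∀ R : ℝ, ∃ N, R < r N := by
    intro R
    obtain ⟨N₀, hN₀⟩ := (Filter.tendsto_atTop.1 hgap 1).exists_forall_of_atTop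
    have step : ∀ k : ℕ, r N₀ + k ≤ r (N₀ + k) := by
      intro k
      induction k with
      | zero => simp
      | succ k ih =>
        have h := hN₀ (N₀ + k) (Nat.le_add_right _ _)
        have : N₀ + (k + 1) = (N₀ + k) + 1 := by omega
        rw [this]
        push_cast
        linarith
    obtain ⟨k, hk⟩ := exists_nat_gt (R - r N₀)
    refine ⟨N₀ + k, ?_⟩
    have := step k
    linarith
  constructor
  · -- BoundedlyOsc with D = 2
    refine ⟨2, fun ε => ?_⟩
    obtain ⟨N, hN⟩ := (Filter.tendsto_atTop.1 hgap (2 * |ε| + 1)).exists_forall_of_atTop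
    refine ⟨Metric.closedBall x₀ (r (N + 1) + |ε|), Metric.isBounded_closedBall, ?_⟩
    intro x hx
    rw [Metric.mem_closedBall, not_le] at hx
    set n := φ x with hn
    have hxlow : r n < dist x x₀ := (key x).1
    have hxhigh : dist x x₀ ≤ r (n + 1) := (key x).2
    have hnN : N + 1 ≤ n := by
      by_contra h
      push_neg at h
      have : r (n + 1) ≤ r (N + 1) := hmono.monotone (by omega)
      have hε : (0:ℝ) ≤ |ε| := abs_nonneg ε
      linarith
    -- any y in the ε-ball around x has φ y within 1 of n
    have claim : ∀ y ∈ Metric.closedBall x ε, n - 1 ≤ φ y ∧ φ y ≤ n + 1 := by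
      intro y hy
      rw [Metric.mem_closedBall] at hy
      have hy' : dist y x ≤ |ε| := hy.trans (le_abs_self ε)
      have hdy1 : dist y x₀ ≤ dist x x₀ + |ε| := by
        have := dist_triangle y x x₀
        linarith
      have hdy2 : dist x x₀ - |ε| ≤ dist y x₀ := by
        have := dist_triangle x y x₀
        rw [dist_comm x y] at this
        linarith
      have gap1 : 2 * |ε| + 1 ≤ r (n + 1 + 1) - r (n + 1) := hN (n + 1) (by omega)
      have gap2 : 2 * |ε| + 1 ≤ r (n - 1 + 1) - r (n - 1) := hN (n - 1) (by omega)
      have hn1 : n - 1 + 1 = n := by omega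
      rw [hn1] at gap2
      constructor
      · -- φ y ≥ n - 1
        have hlow : r (n - 1) < dist y x₀ := by linarith
        by_contra h
        push_neg at h
        have : φ y + 1 ≤ n - 1 := by omega
        have : r (φ y + 1) ≤ r (n - 1) := hmono.monotone this
        have := (key y).2
        linarith
      · -- φ y ≤ n + 1
        have hhigh : dist y x₀ < r (n + 2) := by
          have : n + 1 + 1 = n + 2 := by omega
          rw [this] at gap1
          linarith
        by_contra h
        push_neg at h
        have : r (n + 2) ≤ r (φ y) := hmono.monotone (by omega)
        have := (key y).1
        linarith
    rintro _ ⟨y, hy, rfl⟩ _ ⟨z, hz, rfl⟩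
    obtain ⟨hy1, hy2⟩ := claim y hy
    obtain ⟨hz1, hz2⟩ := claim z hz
    have h1 : φ y ≤ φ z + 2 := by omega
    have h2 : φ z ≤ φ y + 2 := by omega
    rw [Nat.dist_eq]
    rw [abs_le]
    constructor
    · have : (φ z : ℝ) ≤ (φ y : ℝ) + 2 := by exact_mod_cast h2
      linarith
    · have : (φ y : ℝ) ≤ (φ z : ℝ) + 2 := by exact_mod_cast h1
      linarith
  · -- B2BNat
    intro B
    constructor
    · intro hB
      obtain ⟨R, hR⟩ := hB.subset_closedBall x₀
      obtain ⟨N, hN⟩ := hub R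
      apply (Set.finite_Iio N).subset
      rintro _ ⟨x, hx, rfl⟩
      have hxR : dist x x₀ ≤ R := Metric.mem_closedBall.1 (hR hx)
      have : r (φ x) < r N := lt_of_lt_of_le ((key x).1.trans_le hxR) hN.le
      exact hmono.lt_iff_lt.1 this
    · intro hfin
      obtain ⟨N, hN⟩ := hfin.bddAbove
      apply (Metric.isBounded_closedBall (x := x₀) (r := r (N + 1))).subset
      intro x hx
      have hφx : φ x ≤ N := hN ⟨x, hx, rfl⟩
      exact Metric.mem_closedBall.2 ((key x).2.trans (hmono.monotone (by omega)))
end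

section
/- Let φ: X → ω be a boundedly oscillating bounded-to-bounded function on an unbounded metric space X. Then there exists a finite-to-one function ε̃: ω → ω such that sup_{x∈X} diam φ(B(x, ε̃(φ(x)))) < ∞. -/
/-- For a boundedly oscillating bounded-to-bounded `φ : X → ℕ` on an unbounded metric
space there is a finite-to-one `ε̃ : ℕ → ℕ` with
`sup_x diam φ(B(x, ε̃ (φ x))) < ∞`. -/
theorem stmt7 {X : Type*} [MetricSpace X]
    (hX : ¬ Bornology.IsBounded (Set.univ : Set X))
    (φ : X → ℕ) (h1 : BoundedlyOsc φ) (h2 : B2BNat φ) :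
    ∃ εt : ℕ → ℕ, FinToOne εt ∧ ∃ C : ℝ, ∀ x : X,
      ∀ y ∈ φ '' Metric.closedBall x (εt (φ x)),
        ∀ z ∈ φ '' Metric.closedBall x (εt (φ x)), dist y z ≤ C := by
  obtain ⟨D, hD⟩ := h1
  choose B hBb hBp using hD
  -- finite images
  have hfin : ∀ n : ℕ, (φ '' B (n : ℝ)).Finite := fun n => (h2 _).mp (hBb _)
  -- M n : strictly bigger than all values of φ on B n
  set M : ℕ → ℕ := fun n => (hfin n).toFinset.sup id + 1 with hM
  have hMlt : ∀ n : ℕ, ∀ x ∈ B (n : ℝ), φ x < M n := by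
    intro n x hx
    have : φ x ∈ (hfin n).toFinset := by
      simp [Set.Finite.mem_toFinset]
      exact ⟨x, hx, rfl⟩
    have := Finset.le_sup (f := id) this
    simpa [hM] using Nat.lt_succ_of_le this
  -- M' : strictly increasing majorant of M
  set M' : ℕ → ℕ := fun n => (Finset.range (n + 1)).sup M + n with hM'
  have hM'M : ∀ n, M n ≤ M' n := fun n =>
    le_trans (Finset.le_sup (Finset.self_mem_range_succ n)) (Nat.le_add_right _ _)
  have hM'ge : ∀ n, n ≤ M' n := fun n => Nat.le_add_left _ _
  have hM'mono : Monotone M' := by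
    intro a b hab
    exact Nat.add_le_add (Finset.sup_mono (by
      intro x hx; simp only [Finset.mem_range] at *; omega)) hab
  -- the function
  set εt : ℕ → ℕ := fun k => Nat.findGreatest (fun n => M' n ≤ k) k with hεt
  refine ⟨εt, ?_, max D 0, ?_⟩
  · -- finite-to-one
    intro v
    apply Set.Finite.subset (Set.finite_Iio (M' (v + 1)))
    intro k hk
    simp only [Set.mem_preimage, Set.mem_singleton_iff] at hk
    simp only [Set.mem_Iio]
    by_contra hcon
    push_neg at hcon
    have h1 : v + 1 ≤ εt k :=
      Nat.le_findGreatest (P := fun n => M' n ≤ k) (le_trans (hM'ge _) hcon) hcon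
    omega
  · intro x y hy z hz
    set k := φ x with hk
    rcases Nat.eq_zero_or_pos (εt k) with h0 | hpos
    · rw [h0] at hy hz
      obtain ⟨a, ha, rfl⟩ := hy
      obtain ⟨b, hb, rfl⟩ := hz
      simp only [Nat.cast_zero, Metric.mem_closedBall] at ha hb
      have ha' : a = x := by
        have := dist_le_zero.mp ha; exact this
      have hb' : b = x := dist_le_zero.mp hb
      subst ha' hb'
      simp
    · set n := εt k with hn
      have hPn : M' n ≤ k := Nat.findGreatest_of_ne_zero (P := fun m => M' m ≤ k) hn.symm (Nat.pos_iff_ne_zero.mp hpos)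
      have hxB : x ∉ B (n : ℝ) := by
        intro hx
        have := hMlt n x hx
        have := hM'M n
        omega
      have := hBp (n : ℝ) x hxB y hy z hz
      exact le_trans this (le_max_left _ _)
end

section
/- A bounded-to-bounded function f: X → Y between metric spaces is coarse (for every δ < ∞ there is ε < ∞ such that d_X(x,x') ≤ δ implies d_Y(f(x),f(x')) ≤ ε) if and only if for every bounded-to-bounded ε: Y → ω there exists a bounded-to-bounded δ: X → ω such that f(B(x, δ(x))) ⊆ B(f(x), ε(f(x))) for all x ∈ X. -/
/-- `f : X → Y` is bounded-to-bounded: `B ⊆ X` is bounded iff `f '' B` is bounded. -/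
def B2B {X Y : Type*} [MetricSpace X] [MetricSpace Y] (f : X → Y) : Prop :=
  ∀ B : Set X, Bornology.IsBounded B ↔ Bornology.IsBounded (f '' B)

open Classical in
/-- A bounded-to-bounded `f : X → Y` is coarse iff for every bounded-to-bounded
`ε : Y → ℕ` there is a bounded-to-bounded `δ : X → ℕ` with
`f(B(x, δ x)) ⊆ B(f x, ε (f x))` for all `x`. -/
theorem stmt8 {X Y : Type*} [MetricSpace X] [MetricSpace Y]
    (f : X → Y) (hf : B2B f) :
    (∀ δ : ℝ, ∃ ε : ℝ, ∀ x x' : X, dist x x' ≤ δ → dist (f x) (f x') ≤ ε) ↔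
    (∀ ε : Y → ℕ, B2BNat ε → ∃ δ : X → ℕ, B2BNat δ ∧
      ∀ x : X, f '' Metric.closedBall x (δ x) ⊆
        Metric.closedBall (f x) (ε (f x))) := by
  constructor
  · -- forward: coarse implies the combinatorial property
    intro hc ε hε
    -- c n : a coarseness bound for radius n
    set c : ℕ → ℝ := fun n => Classical.choose (hc n) with hc_def
    have hcspec : ∀ n : ℕ, ∀ x x' : X, dist x x' ≤ (n : ℝ) →
        dist (f x) (f x') ≤ c n := fun n => Classical.choose_spec (hc n)
    -- the predicate
    set P : X → ℕ → Prop := fun x n => c n ≤ (ε (f x) : ℝ) ∧ n ≤ ε (f x) with hP_def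
    set δ : X → ℕ := fun x => Nat.findGreatest (P x) (ε (f x)) with hδ_def
    refine ⟨δ, ?_, ?_⟩
    · intro B
      constructor
      · intro hB
        have hfB : Bornology.IsBounded (f '' B) := (hf B).mp hB
        have hfin : (ε '' (f '' B)).Finite := (hε (f '' B)).mp hfB
        obtain ⟨m, hm⟩ := hfin.bddAbove
        refine Set.Finite.subset (Set.finite_Iic m) ?_
        rintro k ⟨x, hx, rfl⟩
        have h1 : δ x ≤ ε (f x) := Nat.findGreatest_le _
        have h2 : ε (f x) ≤ m := hm ⟨f x, ⟨x, hx, rfl⟩, rfl⟩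
        exact h1.trans h2
      · intro hfin
        obtain ⟨m, hm⟩ := hfin.bddAbove
        -- bound ε ∘ f on B
        set K : ℕ := max (m + 1) (⌈c (m + 1)⌉₊) with hK_def
        have hεbd : ∀ x ∈ B, ε (f x) ≤ K := by
          intro x hx
          by_contra hgt
          push_neg at hgt
          have hPm : P x (m + 1) := by
            constructor
            · have : c (m + 1) ≤ (⌈c (m + 1)⌉₊ : ℝ) := Nat.le_ceil _
              refine this.trans ?_
              exact_mod_cast (le_max_right _ _).trans hgt.le
            · exact (le_max_left _ _).trans hgt.le
          have hle : m + 1 ≤ ε (f x) := (le_max_left _ _).trans hgt.le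
          have : m + 1 ≤ δ x := Nat.le_findGreatest hle hPm
          have hδm : δ x ≤ m := hm ⟨x, hx, rfl⟩
          omega
        have hεfin : (ε '' (f '' B)).Finite := by
          refine Set.Finite.subset (Set.finite_Iic K) ?_
          rintro k ⟨y, ⟨x, hx, rfl⟩, rfl⟩
          exact hεbd x hx
        exact (hf B).mpr ((hε (f '' B)).mpr hεfin)
    · intro x y hy
      obtain ⟨x', hx', rfl⟩ := hy
      rw [Metric.mem_closedBall] at hx' ⊢
      rw [dist_comm]
      rcases Nat.eq_zero_or_pos (δ x) with h0 | hpos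
      · rw [h0] at hx'
        norm_num at hx'
        subst hx'
        simp
      · have hPδ : P x (δ x) := Nat.findGreatest_of_ne_zero rfl (Nat.pos_iff_ne_zero.mp hpos)
        have := hcspec (δ x) x x' (by rwa [dist_comm] at hx')
        exact this.trans hPδ.1
  · -- reverse: contrapositive
    intro h δ₀
    by_contra hnc
    push_neg at hnc
    -- sequences of bad pairs
    have hseq : ∀ m : ℕ, ∃ p : X × X, dist p.1 p.2 ≤ δ₀ ∧ (m : ℝ) < dist (f p.1) (f p.2) := by
      intro m
      obtain ⟨x, x', hd, hgt⟩ := hnc m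
      exact ⟨(x, x'), hd, hgt⟩
    choose p hp1 hp2 using hseq
    set a : ℕ → X := fun m => (p m).1 with ha_def
    set b : ℕ → X := fun m => (p m).2 with hb_def
    set y₀ : Y := f (a 0) with hy0_def
    -- construct ε
    set ε : Y → ℕ := fun y =>
      if h : ∃ m, f (a m) = y then min ⌈dist y₀ y⌉₊ (Nat.find h) else ⌈dist y₀ y⌉₊
      with hε_def
    have hεle : ∀ y, ε y ≤ ⌈dist y₀ y⌉₊ := by
      intro y
      by_cases hex : ∃ m, f (a m) = y
      · simp only [hε_def, dif_pos hex]
        exact min_le_left _ _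
      · simp only [hε_def, dif_neg hex, le_refl]
    have hεa : ∀ m, ε (f (a m)) ≤ m := by
      intro m
      have hex : ∃ m', f (a m') = f (a m) := ⟨m, rfl⟩
      have : ε (f (a m)) = min ⌈dist y₀ (f (a m))⌉₊ (Nat.find hex) := by
        rw [hε_def]; simp only [dif_pos hex]
      rw [this]
      exact (min_le_right _ _).trans (Nat.find_le rfl)
    have hεB2B : B2BNat ε := by
      intro B
      constructor
      · intro hB
        obtain ⟨R, hR⟩ := (Metric.isBounded_iff_subset_closedBall y₀).mp hB
        refine Set.Finite.subset (Set.finite_Iic ⌈R⌉₊) ?_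
        rintro k ⟨y, hy, rfl⟩
        have : dist y₀ y ≤ R := by
          have := hR hy
          rwa [Metric.mem_closedBall, dist_comm] at this
        exact (hεle y).trans (Nat.ceil_le_ceil this)
      · intro hfin
        obtain ⟨k, hk⟩ := hfin.bddAbove
        have hsub : B ⊆ Metric.closedBall y₀ k ∪ (fun m => f (a m)) '' Set.Iic k := by
          intro y hy
          have hyk : ε y ≤ k := hk ⟨y, hy, rfl⟩
          by_cases hex : ∃ m, f (a m) = y
          · simp only [hε_def, dif_pos hex] at hyk
            rcases min_le_iff.mp hyk with hc | hfind
            · left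
              rw [Metric.mem_closedBall, dist_comm]
              calc dist y₀ y ≤ ⌈dist y₀ y⌉₊ := Nat.le_ceil _
                _ ≤ (k : ℝ) := by exact_mod_cast hc
            · exact Or.inr ⟨Nat.find hex, hfind, Nat.find_spec hex⟩
          · simp only [hε_def, dif_neg hex] at hyk
            left
            rw [Metric.mem_closedBall, dist_comm]
            calc dist y₀ y ≤ ⌈dist y₀ y⌉₊ := Nat.le_ceil _
              _ ≤ (k : ℝ) := by exact_mod_cast hyk
        exact Bornology.IsBounded.subset
          ((Metric.isBounded_closedBall).union ((Set.finite_Iic k).image _).isBounded) hsub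
    -- get δ
    obtain ⟨δ, hδB2B, hδprop⟩ := h ε hεB2B
    -- each δ (a m) is small
    have hδsmall : ∀ m, (δ (a m) : ℝ) < δ₀ := by
      intro m
      by_contra hge
      push_neg at hge
      have hb_mem : b m ∈ Metric.closedBall (a m) (δ (a m)) :=
        Metric.mem_closedBall.mpr (by rw [dist_comm]; exact (hp1 m).trans hge)
      have := hδprop (a m) ⟨b m, hb_mem, rfl⟩
      rw [Metric.mem_closedBall, dist_comm] at this
      have h1 : dist (f (a m)) (f (b m)) ≤ (m : ℝ) := by
        refine this.trans ?_
        exact_mod_cast hεa m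
      exact absurd (hp2 m) (not_lt.mpr h1)
    -- range a is bounded
    have hrange_a : Bornology.IsBounded (Set.range a) := by
      refine (hδB2B (Set.range a)).mpr ?_
      refine Set.Finite.subset (Set.finite_Iic ⌈δ₀⌉₊) ?_
      rintro k ⟨x, ⟨m, rfl⟩, rfl⟩
      have := (hδsmall m).le.trans (Nat.le_ceil δ₀)
      exact_mod_cast this
    -- range b is bounded
    obtain ⟨R, hR⟩ := (Metric.isBounded_iff_subset_closedBall (a 0)).mp hrange_a
    have hrange_b : Bornology.IsBounded (Set.range b) := by
      refine (Metric.isBounded_iff_subset_closedBall (a 0)).mpr ⟨R + δ₀, ?_⟩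
      rintro x ⟨m, rfl⟩
      rw [Metric.mem_closedBall]
      have h1 : dist (a m) (a 0) ≤ R := Metric.mem_closedBall.mp (hR ⟨m, rfl⟩)
      calc dist (b m) (a 0) ≤ dist (b m) (a m) + dist (a m) (a 0) := dist_triangle _ _ _
        _ ≤ δ₀ + R := add_le_add (by rw [dist_comm]; exact hp1 m) h1
        _ = R + δ₀ := by ring
    -- images are bounded, get contradiction
    have hfa : Bornology.IsBounded (f '' Set.range a) := (hf _).mp hrange_a
    have hfb : Bornology.IsBounded (f '' Set.range b) := (hf _).mp hrange_b
    obtain ⟨R1, hR1⟩ := (Metric.isBounded_iff_subset_closedBall y₀).mp hfa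
    obtain ⟨R2, hR2⟩ := (Metric.isBounded_iff_subset_closedBall y₀).mp hfb
    set M : ℝ := R1 + R2 with hM_def
    have hbound : ∀ m, dist (f (a m)) (f (b m)) ≤ M := by
      intro m
      have h1 : dist (f (a m)) y₀ ≤ R1 := Metric.mem_closedBall.mp (hR1 ⟨a m, ⟨m, rfl⟩, rfl⟩)
      have h2 : dist (f (b m)) y₀ ≤ R2 := Metric.mem_closedBall.mp (hR2 ⟨b m, ⟨m, rfl⟩, rfl⟩)
      calc dist (f (a m)) (f (b m)) ≤ dist (f (a m)) y₀ + dist y₀ (f (b m)) := dist_triangle _ _ _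
        _ ≤ R1 + R2 := add_le_add h1 (by rw [dist_comm]; exact h2)
    have := hp2 ⌈M⌉₊
    have := hbound ⌈M⌉₊
    have hMle : M ≤ (⌈M⌉₊ : ℝ) := Nat.le_ceil _
    linarith
end

section
/- Let X be an unbounded metric space such that for some ε < ∞ the ε-components have unbounded diameters: sup_{x∈X} diam C_ε(x) = ∞. Fix θ ∈ X. Then there exists a sequence (C_n)_{n∈ω} of bounded ε-connected subsets of X such that diam C_n > n and dist(C_n, C_{<n}) ≥ n for every n, where C_{<n} = B_n(θ) ∪ ⋃_{k<n} C_k. -/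
/-- The `ε`-component of `x`: all points linkable to `x` by an `ε`-chain. -/
def epsComp {X : Type*} [MetricSpace X] (ε : ℝ) (x : X) : Set X :=
  {y | Relation.ReflTransGen (fun a b => dist a b ≤ ε) x y}

section Aux

variable {X : Type*} [MetricSpace X]

/-- From a chain starting at `a`, every point of the chain-list is reachable from `a`
by chains staying inside the list. -/
lemma chainReach (ε : ℝ) :
    ∀ (l : List X) (a : X), List.Chain (fun u v : X => dist u v ≤ ε) a l →
      ∀ p ∈ (a :: l), Relation.ReflTransGen
        (fun u v => u ∈ (a :: l) ∧ v ∈ (a :: l) ∧ dist u v ≤ ε) a p := by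
  intro l
  induction l with
  | nil =>
    intro a _ p hp
    simp only [List.mem_singleton] at hp
    subst hp; exact Relation.ReflTransGen.refl
  | cons b l ih =>
    intro a hchain p hp
    rcases List.chain_cons.mp hchain with ⟨hab, hbl⟩
    rcases List.mem_cons.mp hp with rfl | hp'
    · exact Relation.ReflTransGen.refl
    · have hstep : Relation.ReflTransGen
          (fun u v => u ∈ (a :: b :: l) ∧ v ∈ (a :: b :: l) ∧ dist u v ≤ ε) a b :=
        Relation.ReflTransGen.single ⟨by simp, by simp, hab⟩
      have hrest := ih b hbl p hp'
      have hmono : Relation.ReflTransGen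
          (fun u v => u ∈ (a :: b :: l) ∧ v ∈ (a :: b :: l) ∧ dist u v ≤ ε) b p :=
        Relation.ReflTransGen.mono (r := fun u v => u ∈ (b :: l) ∧ v ∈ (b :: l) ∧ dist u v ≤ ε)
          (p := fun u v => u ∈ (a :: b :: l) ∧ v ∈ (a :: b :: l) ∧ dist u v ≤ ε)
          (fun u v hv => ⟨List.mem_cons_of_mem _ hv.1, List.mem_cons_of_mem _ hv.2.1, hv.2.2⟩)
          b p hrest
      exact hstep.trans hmono

/-- Extract from a chain-list ending at a far-away point `z` a suffix that stays
entirely outside the ball of radius `M`, whose head is either the original head or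
is within `M + ε` of the center. -/
lemma suffixOutside (ε M : ℝ) (θ z : X) :
    ∀ l : List X, List.Chain' (fun u v : X => dist u v ≤ ε) l →
      l.getLast? = some z → M < dist z θ →
      ∃ w t, (w :: t) <:+ l ∧ List.Chain' (fun u v : X => dist u v ≤ ε) (w :: t) ∧
        (w :: t).getLast? = some z ∧ (∀ p ∈ (w :: t), M < dist p θ) ∧
        (w :: t = l ∨ dist w θ ≤ M + ε) := by
  intro l
  induction l with
  | nil => intro _ hlast _; simp at hlast
  | cons x xs ih =>
    intro hchain hlast hz
    cases xs with
    | nil =>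
      simp only [List.getLast?_singleton, Option.some.injEq] at hlast
      subst hlast
      exact ⟨x, [], List.suffix_refl _, List.isChain_singleton _, rfl,
        by intro p hp; simp only [List.mem_singleton] at hp; subst hp; exact hz,
        Or.inl rfl⟩
    | cons x' xs' =>
      rcases List.isChain_cons_cons.mp hchain with ⟨hxx', hchain'⟩
      rw [List.getLast?_cons_cons] at hlast
      obtain ⟨w, t, hsuf, hch, hlast', hmem, hdisj⟩ := ih hchain' hlast hz
      rcases hdisj with heq | hnear
      · by_cases hx : M < dist x θ
        · refine ⟨x, x' :: xs', List.suffix_refl _, hchain, by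
            rw [List.getLast?_cons_cons]; exact heq ▸ hlast', ?_, Or.inl rfl⟩
          intro p hp
          rcases List.mem_cons.mp hp with rfl | hp'
          · exact hx
          · exact hmem p (heq ▸ hp')
        · refine ⟨w, t, hsuf.trans (List.suffix_cons x _), hch, hlast', hmem, Or.inr ?_⟩
          have hw : w = x' := by
            have := congrArg List.head? heq
            simpa using this
          subst hw
          calc dist w θ ≤ dist w x + dist x θ := dist_triangle _ _ _
            _ ≤ ε + M := add_le_add (by rw [dist_comm]; exact hxx') (le_of_not_gt hx)
            _ = M + ε := add_comm _ _
      · exact ⟨w, t, hsuf.trans (List.suffix_cons x _), hch, hlast', hmem, Or.inr hnear⟩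

end Aux

/-- If the `ε`-components of an unbounded metric space have unbounded diameters, then
there is a sequence `(C n)` of bounded `ε`-connected sets with `diam (C n) > n` and
`dist (C n, C_{<n}) ≥ n`, where `C_{<n} = B_n(θ) ∪ ⋃_{k<n} C k`. -/
theorem stmt10 {X : Type*} [MetricSpace X]
    (hX : ¬ Bornology.IsBounded (Set.univ : Set X)) (ε : ℝ)
    (h : ∀ D : ℝ, ∃ x : X, ∃ y ∈ epsComp ε x, ∃ z ∈ epsComp ε x, D < dist y z)
    (θ : X) :
    ∃ C : ℕ → Set X,
      (∀ n, Bornology.IsBounded (C n)) ∧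
      (∀ n, ∀ y ∈ C n, ∀ z ∈ C n,
        Relation.ReflTransGen (fun a b => a ∈ C n ∧ b ∈ C n ∧ dist a b ≤ ε) y z) ∧
      (∀ n : ℕ, ∃ y ∈ C n, ∃ z ∈ C n, (n : ℝ) < dist y z) ∧
      (∀ n : ℕ, ∀ a ∈ C n,
        ∀ b ∈ (Metric.closedBall θ (n : ℝ) ∪ ⋃ k ∈ {k | k < n}, C k),
          (n : ℝ) ≤ dist a b) := by
  classical
  -- step 0 : ε is nonnegative
  have hε : 0 ≤ ε := by
    obtain ⟨x, y, hy, z, hz, hyz⟩ := h 0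
    have hne : x ≠ y ∨ x ≠ z := by
      by_contra hc
      push_neg at hc
      rw [← hc.1, ← hc.2, dist_self] at hyz
      exact lt_irrefl _ hyz
    have aux : ∀ w : X, x ≠ w →
        Relation.ReflTransGen (fun a b : X => dist a b ≤ ε) x w → 0 ≤ ε := by
      intro w hne hw
      rcases Relation.ReflTransGen.cases_head hw with rfl | ⟨c, hc, _⟩
      · exact absurd rfl hne
      · exact le_trans dist_nonneg hc
    rcases hne with hne | hne
    · exact aux y hne hy
    · exact aux z hne hz
  have hsymm : Symmetric (fun a b : X => dist a b ≤ ε) := by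
    intro a b hab; rwa [dist_comm]
  -- the key extraction lemma
  have key : ∀ (n : ℕ) (S : Set X), Bornology.IsBounded S →
      ∃ C : Set X, Bornology.IsBounded C ∧
        (∀ y ∈ C, ∀ z ∈ C,
          Relation.ReflTransGen (fun a b => a ∈ C ∧ b ∈ C ∧ dist a b ≤ ε) y z) ∧
        (∃ y ∈ C, ∃ z ∈ C, (n : ℝ) < dist y z) ∧
        (∀ a ∈ C, ∀ b ∈ S, (n : ℝ) ≤ dist a b) := by
    intro n S hS
    obtain ⟨R₀, hR₀⟩ := hS.subset_closedBall θ
    set R : ℝ := max R₀ 0 with hRdef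
    have hR : S ⊆ Metric.closedBall θ R :=
      hR₀.trans (Metric.closedBall_subset_closedBall (le_max_left _ _))
    have hR0 : (0 : ℝ) ≤ R := le_max_right _ _
    set D : ℝ := 2 * (R + 2 * n + ε + 1) with hDdef
    have hDn : (n : ℝ) < D := by
      have hn0 : (0 : ℝ) ≤ n := Nat.cast_nonneg n
      nlinarith
    obtain ⟨x, y, hy, z, hz, hyz⟩ := h D
    -- get a chain between two points, the second of which is far from θ
    have hhalf : D / 2 ≤ dist y θ ∨ D / 2 ≤ dist z θ := by
      by_contra hc
      push_neg at hc
      have := dist_triangle y θ z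
      rw [dist_comm θ z] at this
      linarith [hyz.trans_le this]
    obtain ⟨u, v, huv, hduv, hvθ⟩ :
        ∃ u v : X, Relation.ReflTransGen (fun a b : X => dist a b ≤ ε) u v ∧
          D < dist u v ∧ D / 2 ≤ dist v θ := by
      have hxy : Relation.ReflTransGen (fun a b : X => dist a b ≤ ε) y x :=
        (by haveI : Std.Symm (fun a b : X => dist a b ≤ ε) := ⟨hsymm⟩; exact Std.Symm.symm _ _ hy)
      have hxz : Relation.ReflTransGen (fun a b : X => dist a b ≤ ε) z x :=
        (by haveI : Std.Symm (fun a b : X => dist a b ≤ ε) := ⟨hsymm⟩; exact Std.Symm.symm _ _ hz)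
      rcases hhalf with hfar | hfar
      · exact ⟨z, y, hxz.trans hy, by rwa [dist_comm], hfar⟩
      · exact ⟨y, z, hxy.trans hz, hyz, hfar⟩
    obtain ⟨l, hchain, hlastl⟩ := List.exists_isChain_cons_of_relationReflTransGen huv
    have hchain' : List.Chain' (fun a b : X => dist a b ≤ ε) (u :: l) := hchain
    have hlast? : (u :: l).getLast? = some v := by
      rw [List.getLast?_eq_getLast_of_ne_nil (List.cons_ne_nil _ _), hlastl]
    set M : ℝ := R + n with hMdef
    have hMv : M < dist v θ := by
      have : M + (n + ε + 1) ≤ dist v θ := by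
        have : D / 2 = R + 2 * n + ε + 1 := by rw [hDdef]; ring
        rw [this] at hvθ
        rw [hMdef]; push_cast; linarith
      have hn0 : (0 : ℝ) ≤ n := Nat.cast_nonneg n
      linarith
    obtain ⟨w, t, hsuf, hch, hlast', hmem, hdisj⟩ :=
      suffixOutside ε M θ v (u :: l) hchain' hlast? hMv
    refine ⟨{p | p ∈ (w :: t)}, ?_, ?_, ?_, ?_⟩
    · exact (List.finite_toSet (w :: t)).isBounded
    · -- ε-connectivity inside the set
      have hchaint : List.Chain (fun u v : X => dist u v ≤ ε) w t := hch
      have hreach := chainReach ε t w hchaint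
      have hsymm' : Symmetric
          (fun a b : X => a ∈ (w :: t) ∧ b ∈ (w :: t) ∧ dist a b ≤ ε) := by
        intro a b hab; exact ⟨hab.2.1, hab.1, by rw [dist_comm]; exact hab.2.2⟩
      intro p hp q hq
      have h1 := hreach p hp
      have h2 := hreach q hq
      exact ((by haveI : Std.Symm (fun a b : X => a ∈ (w :: t) ∧ b ∈ (w :: t) ∧ dist a b ≤ ε) := ⟨hsymm'⟩; exact Std.Symm.symm _ _ h1) : Relation.ReflTransGen (fun a b : X => a ∈ (w :: t) ∧ b ∈ (w :: t) ∧ dist a b ≤ ε) p w).trans h2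
    · -- large diameter
      have hvmem : v ∈ (w :: t) := by
        obtain ⟨hne, hv⟩ := List.mem_getLast?_eq_getLast hlast'
        rw [hv]; exact List.getLast_mem hne
      refine ⟨w, List.mem_cons_self, v, hvmem, ?_⟩
      rcases hdisj with heq | hnear
      · have hw : w = u := by
          have := congrArg List.head? heq
          simpa using this
        subst hw
        exact hDn.trans hduv
      · have h1 : D / 2 = R + 2 * n + ε + 1 := by rw [hDdef]; ring
        rw [h1] at hvθ
        have htri : dist v θ ≤ dist v w + dist w θ := dist_triangle v w θ
        have hwv : dist v w = dist w v := dist_comm v w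
        rw [hMdef] at hnear
        have : (n : ℝ) < dist w v := by linarith
        rw [dist_comm]
        linarith
    · -- distance to S
      intro a ha b hb
      have h1 : M < dist a θ := hmem a ha
      have h2 : dist b θ ≤ R := Metric.mem_closedBall.mp (hR hb)
      have := dist_triangle a b θ
      rw [hMdef] at h1
      linarith
  choose F hF1 hF2 hF3 hF4 using key
  -- recursively build the cumulative unions
  let U : ℕ → {s : Set X // Bornology.IsBounded s} := fun n =>
    Nat.rec ⟨∅, Bornology.isBounded_empty⟩
      (fun k p =>
        ⟨p.1 ∪ F k (Metric.closedBall θ (k : ℝ) ∪ p.1)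
            (Metric.isBounded_closedBall.union p.2),
          p.2.union (hF1 k _ _)⟩) n
  let C : ℕ → Set X := fun n =>
    F n (Metric.closedBall θ (n : ℝ) ∪ (U n).1)
      (Metric.isBounded_closedBall.union (U n).2)
  have hU : ∀ n, (U n).1 = ⋃ k ∈ {k | k < n}, C k := by
    intro n
    induction n with
    | zero => simp [U]
    | succ m ih =>
      have hstep : (U (m + 1)).1 = (U m).1 ∪ C m := rfl
      rw [hstep, ih]
      ext p
      simp only [Set.mem_union, Set.mem_iUnion, Set.mem_setOf_eq, exists_prop]
      constructor
      · rintro (⟨k, hk, hp⟩ | hp)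
        · exact ⟨k, Nat.lt_succ_of_lt hk, hp⟩
        · exact ⟨m, Nat.lt_succ_self m, hp⟩
      · rintro ⟨k, hk, hp⟩
        rcases Nat.lt_succ_iff_lt_or_eq.mp hk with hk' | rfl
        · exact Or.inl ⟨k, hk', hp⟩
        · exact Or.inr hp
  refine ⟨C, fun n => hF1 n _ _, fun n => hF2 n _ _, fun n => hF3 n _ _, ?_⟩
  intro n a ha b hb
  rw [← hU n] at hb
  exact hF4 n _ _ a ha b hb
end

section
/- Let (X,d) be an unbounded metric space with asymptotically isolated balls: there is ε > 0 such that for every finite δ ≥ ε there is x ∈ X with B_ε(x) = B_δ(x). Fix such ε. Then there exist an increasing sequence of reals (δ_n) and points (x_n)_{n∈ω} in X such that for all n: δ_n ≥ (n+2)ε, B_{δ_n − ε}(x_k) ⊄ B_{2ε}(x_k) for all k < n, and B_{δ_n}(x_n) = B_ε(x_n); moreover, these conditions imply d(x_k, x_n) ≥ δ_n for all k < n. -/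
/-- In an unbounded metric space with asymptotically isolated balls (witnessed by `ε`),
there exist an increasing sequence of reals `(δ n)` and points `(x n)` such that
`δ n ≥ (n+2)ε`, `B_{δ n − ε}(x k) ⊄ B_{2ε}(x k)` for `k < n`,
`B_{δ n}(x n) = B_ε(x n)`, and moreover `d(x k, x n) ≥ δ n` for `k < n`. -/
theorem stmt11 {X : Type*} [MetricSpace X]
    (hX : ¬ Bornology.IsBounded (Set.univ : Set X))
    (ε : ℝ) (hε : 0 < ε)
    (hiso : ∀ δ : ℝ, ε ≤ δ → ∃ x : X, Metric.closedBall x ε = Metric.closedBall x δ) :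
    ∃ δ : ℕ → ℝ, ∃ x : ℕ → X, StrictMono δ ∧
      (∀ n : ℕ, ((n : ℝ) + 2) * ε ≤ δ n) ∧
      (∀ n : ℕ, ∀ k < n,
        ¬ (Metric.closedBall (x k) (δ n - ε) ⊆ Metric.closedBall (x k) (2 * ε))) ∧
      (∀ n : ℕ, Metric.closedBall (x n) (δ n) = Metric.closedBall (x n) ε) ∧
      (∀ n : ℕ, ∀ k < n, δ n ≤ dist (x k) (x n)) := by
  classical
  have hub : ∀ (x : X) (r : ℝ), ∃ y : X, r < dist y x := by
    intro x r
    by_contra h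
    push_neg at h
    exact hX (Bornology.IsBounded.subset (Metric.isBounded_closedBall (x := x) (r := r))
      (fun y _ => Metric.mem_closedBall.mpr (h y)))
  set Y : X → X := fun x => Classical.choose (hub x (2 * ε)) with hYdef
  have hYspec : ∀ x : X, 2 * ε < dist (Y x) x := fun x => Classical.choose_spec (hub x (2 * ε))
  set pt : ℝ → X := fun d => Classical.choose (hiso (max ε d) (le_max_left _ _)) with hptdef
  have hptspec : ∀ d : ℝ, Metric.closedBall (pt d) ε = Metric.closedBall (pt d) (max ε d) :=
    fun d => Classical.choose_spec (hiso (max ε d) (le_max_left _ _))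
  set D : ℕ → ℝ := fun n => Nat.rec (2 * ε)
    (fun n d => max (max (d + 1) (((n : ℝ) + 3) * ε)) (dist (Y (pt d)) (pt d) + ε)) n with hDdef
  set x : ℕ → X := fun n => pt (D n) with hxdef
  have hDs : ∀ n : ℕ,
      D (n + 1) = max (max (D n + 1) (((n : ℝ) + 3) * ε)) (dist (Y (x n)) (x n) + ε) :=
    fun n => rfl
  have hn2 : ∀ n : ℕ, ((n : ℝ) + 2) * ε ≤ D n := by
    intro n
    cases n with
    | zero => have : D 0 = 2 * ε := rfl; rw [this]; norm_num
    | succ n =>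
      rw [hDs n]
      have : ((↑(n + 1) : ℝ) + 2) * ε = ((n : ℝ) + 3) * ε := by push_cast; ring
      rw [this]
      exact le_trans (le_max_right _ _) (le_max_left _ _)
  have hεD : ∀ n : ℕ, ε ≤ D n := by
    intro n
    have h1 := hn2 n
    have h2 : (0 : ℝ) ≤ (n : ℝ) := Nat.cast_nonneg n
    nlinarith
  have hball : ∀ n : ℕ, Metric.closedBall (x n) (D n) = Metric.closedBall (x n) ε := by
    intro n
    have h := hptspec (D n)
    rw [max_eq_right (hεD n)] at h
    exact h.symm
  have hmono : StrictMono D := by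
    apply strictMono_nat_of_lt_succ
    intro n
    rw [hDs n]
    have : D n < D n + 1 := by linarith
    exact lt_of_lt_of_le this (le_trans (le_max_left _ _) (le_max_left _ _))
  have hwit : ∀ k n : ℕ, k < n → dist (Y (x k)) (x k) ≤ D n - ε := by
    intro k n hk
    have h1 : dist (Y (x k)) (x k) + ε ≤ D (k + 1) := by
      rw [hDs k]; exact le_max_right _ _
    have h2 : D (k + 1) ≤ D n := hmono.monotone hk
    linarith
  refine ⟨D, x, hmono, hn2, ?_, hball, ?_⟩
  · intro n k hk hsub
    have hy := hsub (Metric.mem_closedBall.mpr (hwit k n hk))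
    have := hYspec (x k)
    rw [Metric.mem_closedBall] at hy
    linarith
  · intro n k hk
    by_contra h
    push_neg at h
    have hxk : x k ∈ Metric.closedBall (x n) (D n) := Metric.mem_closedBall.mpr h.le
    rw [hball n] at hxk
    rw [Metric.mem_closedBall] at hxk
    have hy1 : dist (Y (x k)) (x n) ≤ D n := by
      have ht := dist_triangle (Y (x k)) (x k) (x n)
      have := hwit k n hk
      have hxk' := Metric.mem_closedBall.mp hxk
      linarith
    have hy2 : Y (x k) ∈ Metric.closedBall (x n) (D n) := Metric.mem_closedBall.mpr hy1
    rw [hball n, Metric.mem_closedBall] at hy2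
    have ht := dist_triangle (Y (x k)) (x n) (x k)
    have h3 := hYspec (x k)
    have h4 : dist (x n) (x k) ≤ ε := by rw [dist_comm]; exact hxk
    linarith
end

section
/- Let X be an unbounded metric space with asymptotically isolated balls witnessed by ε > 0, and let (x_n)_{n∈ω}, (δ_n) be points and radii as in the asymptotically-isolated-balls construction (with d(x_k,x_n) ≥ δ_n ≥ (n+2)ε for k < n and B_{δ_n}(x_n) = B_ε(x_n)). Set D_ε = ⋃_{n∈ω} B_ε(x_n). Then the characteristic function f: X → {0,1} of D_ε is slowly oscillating. -/
/-- The characteristic function of `D_ε = ⋃ n, B_ε(x n)` arising from the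
asymptotically-isolated-balls construction is slowly oscillating. -/
theorem stmt12 {X : Type*} [MetricSpace X] (ε : ℝ) (hε : 0 < ε)
    (x : ℕ → X) (δ : ℕ → ℝ)
    (h1 : ∀ n : ℕ, ((n : ℝ) + 2) * ε ≤ δ n)
    (h2 : ∀ n : ℕ, ∀ k < n, δ n ≤ dist (x k) (x n))
    (h3 : ∀ n : ℕ, Metric.closedBall (x n) (δ n) = Metric.closedBall (x n) ε) :
    ∀ ε' : ℝ, 0 < ε' → ∀ δ' : ℝ, ∃ B : Set X, Bornology.IsBounded B ∧
      ∀ A : Set X, A ⊆ Bᶜ → (∀ y ∈ A, ∀ z ∈ A, dist y z ≤ δ') →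
        ∀ y ∈ A, ∀ z ∈ A,
          |Set.indicator (⋃ n, Metric.closedBall (x n) ε) (fun _ => (1 : ℝ)) y -
            Set.indicator (⋃ n, Metric.closedBall (x n) ε) (fun _ => (1 : ℝ)) z| ≤ ε' := by
  intro ε' hε' δ'
  set N := ⌈δ' / ε⌉₊ with hNdef
  refine ⟨⋃ n ∈ Finset.range N, Metric.closedBall (x n) ε, ?_, ?_⟩
  · exact (Bornology.isBounded_biUnion_finset (Finset.range N)).mpr
      (fun i _ => Metric.isBounded_closedBall)
  · intro A hA hdiam
    -- key: membership in D is an invariant on A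
    have key : ∀ y ∈ A, ∀ z ∈ A,
        y ∈ (⋃ n, Metric.closedBall (x n) ε) → z ∈ (⋃ n, Metric.closedBall (x n) ε) := by
      intro y hy z hz hyD
      obtain ⟨_, ⟨n, rfl⟩, hyn⟩ := hyD
      have hnN : N ≤ n := by
        by_contra h
        push_neg at h
        exact (hA hy) (Set.mem_biUnion (Finset.mem_range.mpr h) hyn)
      have hNε : δ' ≤ (N : ℝ) * ε := by
        rcases le_or_gt δ' 0 with h | h
        · exact h.trans (by positivity)
        · calc δ' = (δ' / ε) * ε := by field_simp
            _ ≤ (N : ℝ) * ε := by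
              exact mul_le_mul_of_nonneg_right (Nat.le_ceil _) hε.le
      have hdz : dist z (x n) ≤ δ n := by
        calc dist z (x n) ≤ dist z y + dist y (x n) := dist_triangle _ _ _
          _ ≤ δ' + ε := add_le_add (hdiam z hz y hy) (Metric.mem_closedBall.mp hyn)
          _ ≤ (N : ℝ) * ε + ε := by linarith
          _ ≤ ((n : ℝ) + 2) * ε := by
            have : (N : ℝ) ≤ (n : ℝ) := Nat.cast_le.mpr hnN
            nlinarith
          _ ≤ δ n := h1 n
      have : z ∈ Metric.closedBall (x n) ε := by
        rw [← h3 n]; exact Metric.mem_closedBall.mpr hdz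
      exact Set.mem_iUnion.mpr ⟨n, this⟩
    intro y hy z hz
    have hiff : y ∈ (⋃ n, Metric.closedBall (x n) ε) ↔
        z ∈ (⋃ n, Metric.closedBall (x n) ε) := ⟨key y hy z hz, key z hz y hy⟩
    by_cases hyD : y ∈ (⋃ n, Metric.closedBall (x n) ε)
    · rw [Set.indicator_of_mem hyD, Set.indicator_of_mem (hiff.mp hyD)]
      simpa using hε'.le
    · rw [Set.indicator_of_notMem hyD, Set.indicator_of_notMem (fun h => hyD (hiff.mpr h))]
      simpa using hε'.le
end

section
/- The Cantor macro-cube 2^{<ℕ} has no asymptotically isolated balls: for every ε < ∞ there exists a finite δ ≥ ε such that for all x ∈ 2^{<ℕ}, B_ε(x) ≠ B_δ(x). -/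
/-- The Cantor macro-cube: eventually-zero 0-1 sequences. -/
def CMC : Type := {x : ℕ → Bool // {n | x n = true}.Finite}

/-- The ultrametric `d((x_n),(y_n)) = max_n 2^n |x_n − y_n|` on the Cantor macro-cube. -/
noncomputable def cdist (x y : CMC) : ℝ :=
  sSup (insert 0 {r : ℝ | ∃ n : ℕ, x.1 n ≠ y.1 n ∧ r = 2 ^ n})

/-- Flip coordinate `n` of `x`. -/
noncomputable def cflip (x : CMC) (n : ℕ) : CMC :=
  ⟨fun m => if m = n then !x.1 m else x.1 m, by
    apply Set.Finite.subset (x.2.union (Set.finite_singleton n))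
    intro m hm
    by_cases h : m = n
    · exact Or.inr h
    · left
      simpa [h] using hm⟩

lemma cdist_cflip (x : CMC) (n : ℕ) : cdist (cflip x n) x = 2 ^ n := by
  have hset : {r : ℝ | ∃ m : ℕ, (cflip x n).1 m ≠ x.1 m ∧ r = 2 ^ m} = {(2 : ℝ) ^ n} := by
    ext r
    simp only [Set.mem_setOf_eq, Set.mem_singleton_iff]
    constructor
    · rintro ⟨m, hm, rfl⟩
      by_cases h : m = n
      · subst h; rfl
      · exact absurd hm (by simp [cflip, h])
    · rintro rfl
      exact ⟨n, by simp [cflip], rfl⟩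
  rw [cdist, hset]
  rw [show (insert (0:ℝ) {(2:ℝ)^n} : Set ℝ) = {(0:ℝ), (2:ℝ)^n} from rfl, csSup_pair]
  exact max_eq_right (by positivity)

/-- The Cantor macro-cube has no asymptotically isolated balls: for every `ε` there is a
finite `δ ≥ ε` such that `B_ε(x) ≠ B_δ(x)` for all `x`. -/
theorem stmt14 :
    ∀ ε : ℝ, ∃ δ : ℝ, ε ≤ δ ∧
      ∀ x : CMC, {y : CMC | cdist y x ≤ ε} ≠ {y : CMC | cdist y x ≤ δ} := by
  intro ε
  obtain ⟨n, hn⟩ := pow_unbounded_of_one_lt ε (by norm_num : (1:ℝ) < 2)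
  refine ⟨2 ^ n, le_of_lt hn, fun x h => ?_⟩
  have hy : cflip x n ∈ {y : CMC | cdist y x ≤ 2 ^ n} := by
    simp [Set.mem_setOf_eq, cdist_cflip]
  rw [← h] at hy
  simp only [Set.mem_setOf_eq, cdist_cflip] at hy
  exact absurd hy (not_le.2 hn)
end

section
/- Let 𝒰 be a free ultrafilter on ω with χ(𝒰) < 𝔡, where χ(𝒰) is the smallest cardinality of a base of 𝒰. Then the linearly preordered set (ω^{↑ω}, ≤_𝒰) of finite-to-one functions ω → ω, where f ≤_𝒰 g iff {n : f(n) ≤ g(n)} ∈ 𝒰, has both coinitiality and cofinality equal to 𝔡. -/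
open Cardinal Set

namespace Stmt18Aux

/-- a strictly increasing majorant of `h` -/
def incr (h : ℕ → ℕ) (n : ℕ) : ℕ := n + (Finset.range (n + 1)).sup h

lemma le_incr (h : ℕ → ℕ) (n : ℕ) : h n ≤ incr h n := by
  have : h n ≤ (Finset.range (n + 1)).sup h :=
    Finset.le_sup (Finset.self_mem_range_succ n)
  unfold incr; omega

lemma self_le_incr (h : ℕ → ℕ) (n : ℕ) : n ≤ incr h n := Nat.le_add_right _ _

lemma incr_mono (h : ℕ → ℕ) : Monotone (incr h) := by
  have : StrictMono (incr h) := by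
    apply strictMono_nat_of_lt_succ
    intro n
    have : (Finset.range (n + 1)).sup h ≤ (Finset.range (n + 1 + 1)).sup h :=
      Finset.sup_mono (Finset.range_subset_range.mpr (by omega))
    show n + (Finset.range (n + 1)).sup h < (n+1) + (Finset.range (n + 1 + 1)).sup h
    omega
  exact this.monotone

/-- a slow "inverse" of `u` -/
noncomputable def sInv (u : ℕ → ℕ) (n : ℕ) : ℕ := sInf {k | n ≤ u k}

lemma sInv_le (u : ℕ → ℕ) {n k : ℕ} (h : n ≤ u k) : sInv u n ≤ k := Nat.sInf_le h

lemma le_u_sInv (u : ℕ → ℕ) (n : ℕ) (h : ∃ k, n ≤ u k) : n ≤ u (sInv u n) :=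
  Nat.sInf_mem h

lemma finToOne_sInv (u : ℕ → ℕ) (hu : ∀ n, n ≤ u n) : FinToOne (sInv u) := by
  intro k
  apply Set.Finite.subset (Set.finite_Iic (u k))
  intro n hn
  simp only [Set.mem_preimage, Set.mem_singleton_iff] at hn
  have := le_u_sInv u n ⟨n, hu n⟩
  rw [hn] at this
  exact this

lemma finToOne_of_le {u : ℕ → ℕ} (hu : ∀ n, n ≤ u n) : FinToOne u := by
  intro k
  apply Set.Finite.subset (Set.finite_Iic k)
  intro n hn
  simp only [Set.mem_preimage, Set.mem_singleton_iff] at hn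
  have := hu n; rw [hn] at this; exact this

lemma finite_le {g : ℕ → ℕ} (hg : FinToOne g) (k : ℕ) : {n | g n ≤ k}.Finite := by
  have hsub : {n | g n ≤ k} ⊆ ⋃ i ∈ Finset.range (k + 1), g ⁻¹' {i} := by
    intro n hn
    simp only [Set.mem_iUnion, Finset.mem_range, Set.mem_preimage, Set.mem_singleton_iff]
    exact ⟨g n, by exact Nat.lt_succ_of_le hn, rfl⟩
  exact Set.Finite.subset (Set.Finite.biUnion (Finset.finite_toSet _) (fun i _ => hg i)) hsub

/-- least upper bound for `{n | g n ≤ k}` -/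
noncomputable def ub (g : ℕ → ℕ) (k : ℕ) : ℕ := sInf {j | ∀ n, g n ≤ k → n ≤ j}

lemma ub_spec {g : ℕ → ℕ} (hg : FinToOne g) (k : ℕ) : ∀ n, g n ≤ k → n ≤ ub g k := by
  obtain ⟨N, hN⟩ := (finite_le hg k).bddAbove
  exact Nat.sInf_mem (s := {j | ∀ n, g n ≤ k → n ≤ j}) ⟨N, fun n hn => hN hn⟩

/-- the function built in the lower bound for `qU` -/
noncomputable def phi (f : ℕ → ℕ) (b : Set ℕ) (k : ℕ) : ℕ :=
  sInf {j | j ∈ b ∧ ∀ m ∈ b, f m ≤ k → m < j}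

lemma phi_mem {f : ℕ → ℕ} (b : Set ℕ) (k : ℕ) (hf : FinToOne f) (hb : b.Infinite) :
    phi f b k ∈ b ∧ ∀ m ∈ b, f m ≤ k → m < phi f b k := by
  obtain ⟨N, hN⟩ := (finite_le hf k).bddAbove
  obtain ⟨j, hjb, hj⟩ := hb.exists_gt N
  exact Nat.sInf_mem (s := {j | j ∈ b ∧ ∀ m ∈ b, f m ≤ k → m < j}) ⟨j, hjb, fun m _ hfm => lt_of_le_of_lt (hN hfm) hj⟩

lemma phi_dominates (h : ℕ → ℕ) {f : ℕ → ℕ} {b : Set ℕ} (hf : FinToOne f)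
    (hb : b.Infinite) (hfb : ∀ m ∈ b, f m ≤ sInv (incr h) m) (k : ℕ) :
    h k ≤ phi f b k := by
  obtain ⟨hmem, hlt⟩ := phi_mem b k hf hb
  by_contra hc
  push_neg at hc
  have h1 : phi f b k ≤ incr h k := le_trans hc.le (le_incr h k)
  have h2 : sInv (incr h) (phi f b k) ≤ k := sInv_le _ h1
  have h3 : f (phi f b k) ≤ k := le_trans (hfb _ hmem) h2
  exact lt_irrefl _ (hlt _ hmem h3)

/-- the least element of `b` that is `≥ n` -/
noncomputable def nextIn (b : Set ℕ) (n : ℕ) : ℕ := sInf {m | m ∈ b ∧ n ≤ m}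

lemma nextIn_spec {b : Set ℕ} (hb : b.Infinite) (n : ℕ) :
    nextIn b n ∈ b ∧ n ≤ nextIn b n := by
  obtain ⟨m, hm, hnm⟩ := hb.exists_gt n
  exact Nat.sInf_mem (s := {m | m ∈ b ∧ n ≤ m}) ⟨m, hm, hnm.le⟩

lemma infinite_of_memU (U : Ultrafilter ℕ) (hfree : (U : Filter ℕ) ≤ Filter.cofinite)
    {b : Set ℕ} (hb : b ∈ U) : b.Infinite := by
  by_contra hninf
  rw [Set.not_infinite] at hninf
  have h1 : bᶜ ∈ Filter.cofinite := by
    rw [Filter.mem_cofinite, compl_compl]; exact hninf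
  have h2 : bᶜ ∈ U := hfree h1
  have h3 : b ∩ bᶜ ∈ U := Filter.inter_mem hb h2
  rw [Set.inter_compl_self] at h3
  exact Filter.empty_notMem (U : Filter ℕ) h3

end Stmt18Aux

/-- The character `χ(𝒰)` of an ultrafilter on ℕ: least cardinality of a base. -/
noncomputable def uchar (U : Ultrafilter ℕ) : Cardinal :=
  sInf {c : Cardinal | ∃ B : Set (Set ℕ), Cardinal.mk B = c ∧
    (∀ b ∈ B, b ∈ U) ∧ ∀ A ∈ U, ∃ b ∈ B, b ⊆ A}

/-- `𝔮(𝒰)`: coinitiality of the finite-to-one functions under `≤_𝒰`. -/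
noncomputable def qU (U : Ultrafilter ℕ) : Cardinal :=
  sInf {c : Cardinal | ∃ A : Set (ℕ → ℕ), Cardinal.mk A = c ∧
    (∀ f ∈ A, FinToOne f) ∧
    ∀ g : ℕ → ℕ, FinToOne g → ∃ f ∈ A, {n | f n ≤ g n} ∈ U}

/-- `𝔡(𝒰)`: cofinality of the finite-to-one functions under `≤_𝒰`. -/
noncomputable def dU (U : Ultrafilter ℕ) : Cardinal :=
  sInf {c : Cardinal | ∃ A : Set (ℕ → ℕ), Cardinal.mk A = c ∧
    (∀ f ∈ A, FinToOne f) ∧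
    ∀ g : ℕ → ℕ, FinToOne g → ∃ f ∈ A, {n | g n ≤ f n} ∈ U}

namespace Stmt18Aux

lemma exists_dom : ∃ D : Set (ℕ → ℕ), Cardinal.mk D = domNum ∧
    ∀ g : ℕ → ℕ, ∃ f ∈ D, ∀ n, g n ≤ f n := by
  have hne : {c : Cardinal |
      ∃ D : Set (ℕ → ℕ), Cardinal.mk D = c ∧ ∀ g : ℕ → ℕ, ∃ f ∈ D, ∀ n, g n ≤ f n}.Nonempty :=
    ⟨Cardinal.mk (Set.univ : Set (ℕ → ℕ)), Set.univ, rfl,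
      fun g => ⟨g, Set.mem_univ g, fun _ => le_rfl⟩⟩
  exact csInf_mem hne

lemma aleph0_lt_domNum : ℵ₀ < domNum := by
  obtain ⟨D, hmk, hdom⟩ := exists_dom
  rw [← hmk, ← not_le]
  intro hle
  have hc : D.Countable := by
    rwa [Cardinal.mk_le_aleph0_iff, Set.countable_coe_iff] at hle
  have hne : D.Nonempty := by
    obtain ⟨f, hf, _⟩ := hdom (fun _ => 0); exact ⟨f, hf⟩
  obtain ⟨F, hF⟩ := hc.exists_eq_range hne
  obtain ⟨f, hf, hd⟩ := hdom (fun n => F n n + 1)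
  rw [hF] at hf
  obtain ⟨i, rfl⟩ := hf
  exact Nat.not_succ_le_self _ (hd i)

lemma qU_le (U : Ultrafilter ℕ) : qU U ≤ domNum := by
  obtain ⟨D, hmk, hdom⟩ := exists_dom
  have h1 : Cardinal.mk (Set.range (fun f : ↥D => sInv (incr (f : ℕ → ℕ)))) ≤ domNum :=
    le_trans Cardinal.mk_range_le (le_of_eq hmk)
  refine le_trans (csInf_le' ?_) h1
  refine ⟨Set.range (fun f : ↥D => sInv (incr (f : ℕ → ℕ))), rfl, ?_, ?_⟩
  · rintro f ⟨⟨g, hg⟩, rfl⟩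
    exact finToOne_sInv _ (self_le_incr _)
  · intro g hg
    obtain ⟨f, hf, hd⟩ := hdom (ub g)
    refine ⟨sInv (incr f), ⟨⟨f, hf⟩, rfl⟩, ?_⟩
    have : {n | sInv (incr f) n ≤ g n} = Set.univ := by
      apply Set.eq_univ_of_forall
      intro n
      apply sInv_le
      exact le_trans (ub_spec hg (g n) n le_rfl) (le_trans (hd (g n)) (le_incr f (g n)))
    rw [this]
    exact Filter.univ_mem
  
lemma dU_le (U : Ultrafilter ℕ) : dU U ≤ domNum := by
  obtain ⟨D, hmk, hdom⟩ := exists_dom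
  have h1 : Cardinal.mk (Set.range (fun f : ↥D => fun n => (f : ℕ → ℕ) n + n)) ≤ domNum :=
    le_trans Cardinal.mk_range_le (le_of_eq hmk)
  refine le_trans (csInf_le' ?_) h1
  refine ⟨Set.range (fun f : ↥D => fun n => (f : ℕ → ℕ) n + n), rfl, ?_, ?_⟩
  · rintro f ⟨⟨g, hg⟩, rfl⟩
    exact finToOne_of_le (fun n => Nat.le_add_left n _)
  · intro g hg
    obtain ⟨f, hf, hd⟩ := hdom g
    refine ⟨(fun n => f n + n), ⟨⟨f, hf⟩, rfl⟩, ?_⟩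
    have : {n | g n ≤ f n + n} = Set.univ :=
      Set.eq_univ_of_forall (fun n => le_trans (hd n) (Nat.le_add_right _ _))
    rw [this]
    exact Filter.univ_mem

lemma exists_base (U : Ultrafilter ℕ) : ∃ B : Set (Set ℕ), Cardinal.mk B = uchar U ∧
    (∀ b ∈ B, b ∈ U) ∧ ∀ A ∈ U, ∃ b ∈ B, b ⊆ A := by
  have hne : {c : Cardinal | ∃ B : Set (Set ℕ), Cardinal.mk B = c ∧
      (∀ b ∈ B, b ∈ U) ∧ ∀ A ∈ U, ∃ b ∈ B, b ⊆ A}.Nonempty :=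
    ⟨Cardinal.mk {s : Set ℕ | s ∈ U}, {s : Set ℕ | s ∈ U}, rfl,
      fun b hb => hb, fun A hA => ⟨A, hA, subset_rfl⟩⟩
  exact csInf_mem hne

lemma exists_qfam (U : Ultrafilter ℕ) : ∃ A : Set (ℕ → ℕ), Cardinal.mk A = qU U ∧
    (∀ f ∈ A, FinToOne f) ∧
    ∀ g : ℕ → ℕ, FinToOne g → ∃ f ∈ A, {n | f n ≤ g n} ∈ U := by
  have hne : {c : Cardinal | ∃ A : Set (ℕ → ℕ), Cardinal.mk A = c ∧
      (∀ f ∈ A, FinToOne f) ∧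
      ∀ g : ℕ → ℕ, FinToOne g → ∃ f ∈ A, {n | f n ≤ g n} ∈ U}.Nonempty := by
    refine ⟨Cardinal.mk {f : ℕ → ℕ | FinToOne f}, {f : ℕ → ℕ | FinToOne f}, rfl,
      fun f hf => hf, fun g hg => ⟨g, hg, ?_⟩⟩
    have : {n | g n ≤ g n} = Set.univ := Set.eq_univ_of_forall (fun n => Set.mem_setOf_eq ▸ le_rfl)
    rw [this]
    exact Filter.univ_mem
  exact csInf_mem hne

lemma exists_dfam (U : Ultrafilter ℕ) : ∃ A : Set (ℕ → ℕ), Cardinal.mk A = dU U ∧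
    (∀ f ∈ A, FinToOne f) ∧
    ∀ g : ℕ → ℕ, FinToOne g → ∃ f ∈ A, {n | g n ≤ f n} ∈ U := by
  have hne : {c : Cardinal | ∃ A : Set (ℕ → ℕ), Cardinal.mk A = c ∧
      (∀ f ∈ A, FinToOne f) ∧
      ∀ g : ℕ → ℕ, FinToOne g → ∃ f ∈ A, {n | g n ≤ f n} ∈ U}.Nonempty := by
    refine ⟨Cardinal.mk {f : ℕ → ℕ | FinToOne f}, {f : ℕ → ℕ | FinToOne f}, rfl,
      fun f hf => hf, fun g hg => ⟨g, hg, ?_⟩⟩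
    have : {n | g n ≤ g n} = Set.univ := Set.eq_univ_of_forall (fun n => Set.mem_setOf_eq ▸ le_rfl)
    rw [this]
    exact Filter.univ_mem
  exact csInf_mem hne

lemma qU_ge (U : Ultrafilter ℕ) (hfree : (U : Filter ℕ) ≤ Filter.cofinite)
    (hchar : uchar U < domNum) : domNum ≤ qU U := by
  by_contra hlt
  push_neg at hlt
  obtain ⟨A, hAmk, hAfin, hAco⟩ := exists_qfam U
  obtain ⟨B, hBmk, hBU, hBbase⟩ := exists_base U
  have hdomle : domNum ≤ Cardinal.mk (Set.range (fun p : ↥A × ↥B => phi p.1.1 p.2.1)) := by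
    apply csInf_le'
    refine ⟨Set.range (fun p : ↥A × ↥B => phi p.1.1 p.2.1), rfl, ?_⟩
    intro h
    have htf : FinToOne (sInv (incr h)) := finToOne_sInv _ (self_le_incr h)
    obtain ⟨f, hfA, hfU⟩ := hAco _ htf
    obtain ⟨b, hbB, hbsub⟩ := hBbase _ hfU
    have hbinf : b.Infinite := infinite_of_memU U hfree (hBU b hbB)
    refine ⟨phi f b, ⟨(⟨f, hfA⟩, ⟨b, hbB⟩), rfl⟩, ?_⟩
    exact phi_dominates h (hAfin f hfA) hbinf (fun m hm => hbsub hm)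
  have hcard : Cardinal.mk (Set.range (fun p : ↥A × ↥B => phi p.1.1 p.2.1))
      ≤ qU U * uchar U := by
    refine le_trans Cardinal.mk_range_le ?_
    rw [← hAmk, ← hBmk]
    simp [Cardinal.mk_prod]
  have hmul : qU U * uchar U < domNum :=
    Cardinal.mul_lt_of_lt (le_of_lt aleph0_lt_domNum) hlt hchar
  exact absurd (le_trans hdomle hcard) (not_le.mpr hmul)

lemma dU_ge (U : Ultrafilter ℕ) (hfree : (U : Filter ℕ) ≤ Filter.cofinite)
    (hchar : uchar U < domNum) : domNum ≤ dU U := by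
  by_contra hlt
  push_neg at hlt
  obtain ⟨A, hAmk, hAfin, hAco⟩ := exists_dfam U
  obtain ⟨B, hBmk, hBU, hBbase⟩ := exists_base U
  have hdomle : domNum ≤ Cardinal.mk
      (Set.range (fun p : ↥A × ↥B => fun n => (p.1.1 : ℕ → ℕ) (nextIn p.2.1 n))) := by
    apply csInf_le'
    refine ⟨_, rfl, ?_⟩
    intro h
    have hgf : FinToOne (incr h) := finToOne_of_le (self_le_incr h)
    obtain ⟨f, hfA, hfU⟩ := hAco _ hgf
    obtain ⟨b, hbB, hbsub⟩ := hBbase _ hfU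
    have hbinf : b.Infinite := infinite_of_memU U hfree (hBU b hbB)
    refine ⟨_, ⟨(⟨f, hfA⟩, ⟨b, hbB⟩), rfl⟩, ?_⟩
    intro n
    obtain ⟨hm, hnm⟩ := nextIn_spec hbinf n
    calc h n ≤ incr h n := le_incr h n
      _ ≤ incr h (nextIn b n) := incr_mono h hnm
      _ ≤ f (nextIn b n) := hbsub hm
  have hcard : Cardinal.mk
      (Set.range (fun p : ↥A × ↥B => fun n => (p.1.1 : ℕ → ℕ) (nextIn p.2.1 n)))
      ≤ dU U * uchar U := by
    refine le_trans Cardinal.mk_range_le ?_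
    rw [← hAmk, ← hBmk]
    simp [Cardinal.mk_prod]
  have hmul : dU U * uchar U < domNum :=
    Cardinal.mul_lt_of_lt (le_of_lt aleph0_lt_domNum) hlt hchar
  exact absurd (le_trans hdomle hcard) (not_le.mpr hmul)

end Stmt18Aux

/-- If a free ultrafilter `𝒰` on ℕ has character `χ(𝒰) < 𝔡`, then the coinitiality and
cofinality of the finite-to-one functions under `≤_𝒰` are both equal to `𝔡`. -/
theorem stmt18 (U : Ultrafilter ℕ) (hfree : (U : Filter ℕ) ≤ Filter.cofinite)
    (hchar : uchar U < domNum) :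
    qU U = domNum ∧ dU U = domNum :=
  ⟨le_antisymm (Stmt18Aux.qU_le U) (Stmt18Aux.qU_ge U hfree hchar),
   le_antisymm (Stmt18Aux.dU_le U) (Stmt18Aux.dU_ge U hfree hchar)⟩
end
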